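/- arXiv:2411.19272 — 8 statements merged into one kernel-verified Lean document; each statement's English description precedes it below -/
import Mathlib

section
/- Let g, h: X → ℝ ∪ {+∞} be lower semicontinuous, proper, convex functions and C ⊆ X a nonempty closed convex set with (dom g) ∩ C ≠ ∅. If x̄ ∈ (dom g) ∩ (dom h) ∩ C is a local solution of the problem: minimize f(x) = g(x) − h(x) subject to x ∈ C, then ∂h(x̄) ⊆ ∂(g + δ_C)(x̄). -/
open Pointwise Topology

/-- A generalized polyhedral convex set: the intersection of a closed affine subspace
with finitely many closed half-spaces given by continuous linear functionals. -/
def IsGPCS (X : Type*) [AddCommGroup X] [Module ℝ X] [TopologicalSpace X] (S : Set X) : Prop :=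
  ∃ (L : AffineSubspace ℝ X) (p : ℕ) (a : Fin p → (X →L[ℝ] ℝ)) (c : Fin p → ℝ),
    IsClosed (L : Set X) ∧ S = {x : X | x ∈ L ∧ ∀ k, a k x ≤ c k}

/-- The epigraph of an extended-real-valued function. -/
def epigraph {X : Type*} (ψ : X → EReal) : Set (X × ℝ) := {p | ψ p.1 ≤ (p.2 : EReal)}

/-- A generalized polyhedral convex function: one whose epigraph is a generalized
polyhedral convex set in `X × ℝ`. -/
def IsGPCF (X : Type*) [AddCommGroup X] [Module ℝ X] [TopologicalSpace X] (ψ : X → EReal) : Prop :=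
  IsGPCS (X × ℝ) (epigraph ψ)

/-- A proper function: not identically `+∞` and never `-∞`. -/
def ProperFn {X : Type*} (ψ : X → EReal) : Prop := (∃ x, ψ x ≠ ⊤) ∧ ∀ x, ψ x ≠ ⊥

/-- Convexity of an extended-real-valued function, via convexity of the epigraph. -/
def ConvexFn {X : Type*} [AddCommGroup X] [Module ℝ X] (ψ : X → EReal) : Prop :=
  Convex ℝ (epigraph ψ)

/-- The effective domain of an extended-real-valued function. -/
def domFn {X : Type*} (ψ : X → EReal) : Set X := {x | ψ x ≠ ⊤}

open Classical in
/-- The indicator function of a set: `0` on the set, `+∞` outside. -/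
noncomputable def indFn {X : Type*} (C : Set X) : X → EReal := fun x => if x ∈ C then 0 else ⊤

open Classical in
/-- The DC objective `g - h` with the convention `(+∞) - (+∞) = +∞`. -/
noncomputable def dcObj {X : Type*} (g h : X → EReal) : X → EReal :=
  fun x => if g x = ⊤ ∧ h x = ⊤ then ⊤ else g x - h x

/-- The subdifferential (in the sense of convex analysis) of `φ` at `x₀`. -/
def SubdiffAt {X : Type*} [AddCommGroup X] [Module ℝ X] [TopologicalSpace X]
    (φ : X → EReal) (x₀ : X) : Set (X →L[ℝ] ℝ) :=
  {p | ∀ x : X, ((p x - p x₀ : ℝ) : EReal) ≤ φ x - φ x₀}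

/-- The subdifferential of a function defined on the dual space, with values in `X`
(the dual of `X*` in the weak* topology). -/
def SubdiffStarAt {X : Type*} [AddCommGroup X] [Module ℝ X] [TopologicalSpace X]
    (Φ : (X →L[ℝ] ℝ) → EReal) (p₀ : X →L[ℝ] ℝ) : Set X :=
  {x | ∀ p : X →L[ℝ] ℝ, ((p x - p₀ x : ℝ) : EReal) ≤ Φ p - Φ p₀}

/-- The normal cone to a convex set `C` at `x₀ ∈ C`. -/
def normalConeAt {X : Type*} [AddCommGroup X] [Module ℝ X] [TopologicalSpace X]
    (C : Set X) (x₀ : X) : Set (X →L[ℝ] ℝ) :=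
  {p | ∀ x ∈ C, p x - p x₀ ≤ 0}

/-- The Fenchel conjugate function. -/
noncomputable def conjFn {X : Type*} [AddCommGroup X] [Module ℝ X] [TopologicalSpace X]
    (φ : X → EReal) : (X →L[ℝ] ℝ) → EReal :=
  fun p => ⨆ x : X, (((p x : ℝ) : EReal) - φ x)

/-- `x₀` is a local solution of: minimize `g - h` over `C`. -/
def IsLocalSolution {X : Type*} [TopologicalSpace X] (g h : X → EReal) (C : Set X)
    (x₀ : X) : Prop :=
  x₀ ∈ C ∧ ∃ U ∈ nhds x₀, ∀ x ∈ C ∩ U, dcObj g h x₀ ≤ dcObj g h x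

/-- `x₀` is a (global) solution of: minimize `g - h` over `C`. -/
def IsSolution {X : Type*} (g h : X → EReal) (C : Set X) (x₀ : X) : Prop :=
  x₀ ∈ C ∧ ∀ x ∈ C, dcObj g h x₀ ≤ dcObj g h x

/-- `S` is open in the relative topology of `C`. -/
def RelOpenIn {X : Type*} [TopologicalSpace X] (C S : Set X) : Prop :=
  ∃ V : Set X, IsOpen V ∧ S = C ∩ V

/-- A semi-closed generalized polyhedral convex subset of `C`: the intersection of a
generalized polyhedral convex subset of `C` with a convex subset of `C` that is open
in the relative topology of `C`. -/
def IsSemiClosedGPCSIn {X : Type*} [AddCommGroup X] [Module ℝ X] [TopologicalSpace X]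
    (C S : Set X) : Prop :=
  ∃ P Q : Set X, IsGPCS X P ∧ P ⊆ C ∧ Convex ℝ Q ∧ Q ⊆ C ∧ RelOpenIn C Q ∧ S = P ∩ Q

/-- necessary optimality condition for local solutions of a DC program. -/
theorem stmt0 {X : Type*} [AddCommGroup X] [Module ℝ X] [TopologicalSpace X]
    [IsTopologicalAddGroup X] [ContinuousSMul ℝ X] [LocallyConvexSpace ℝ X] [T2Space X]
    (g h : X → EReal)
    (hg1 : LowerSemicontinuous g) (hg2 : ProperFn g) (hg3 : ConvexFn g)
    (hh1 : LowerSemicontinuous h) (hh2 : ProperFn h) (hh3 : ConvexFn h)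
    (C : Set X) (hC1 : C.Nonempty) (hC2 : IsClosed C) (hC3 : Convex ℝ C)
    (hdom : (domFn g ∩ C).Nonempty)
    (x₀ : X) (hx₀ : x₀ ∈ domFn g ∩ domFn h ∩ C)
    (hloc : IsLocalSolution g h C x₀) :
    SubdiffAt h x₀ ⊆ SubdiffAt (fun x => g x + indFn C x) x₀ := by
  intro p hp
  obtain ⟨⟨hxg, hxh⟩, hxC⟩ := hx₀
  obtain ⟨_, U, hU, hmin⟩ := hloc
  -- real values of g x₀ and h x₀
  set a : ℝ := (g x₀).toReal with ha'
  set b : ℝ := (h x₀).toReal with hb'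
  have hga : g x₀ = (a : EReal) := (EReal.coe_toReal hxg (hg2.2 x₀)).symm
  have hhb : h x₀ = (b : EReal) := (EReal.coe_toReal hxh (hh2.2 x₀)).symm
  intro x
  simp only
  have hind₀ : indFn C x₀ = 0 := by simp [indFn, hxC]
  rw [hind₀, add_zero]
  by_cases hxCmem : x ∈ C
  · have hind : indFn C x = 0 := by simp [indFn, hxCmem]
    rw [hind, add_zero]
    by_cases hgx : g x = ⊤
    · rw [hgx, hga]
      rw [show (⊤ : EReal) - (a : EReal) = ⊤ from rfl]
      exact le_top
    · set c : ℝ := (g x).toReal with hc'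
      have hgc : g x = (c : EReal) := (EReal.coe_toReal hgx (hg2.2 x)).symm
      -- find small t with x₀ + t • (x - x₀) ∈ U
      have hcont : Continuous (fun t : ℝ => x₀ + t • (x - x₀)) :=
        continuous_const.add (continuous_id.smul continuous_const)
      have h0 : (fun t : ℝ => x₀ + t • (x - x₀)) 0 = x₀ := by simp
      have hpre : (fun t : ℝ => x₀ + t • (x - x₀)) ⁻¹' U ∈ nhds (0 : ℝ) := by
        apply hcont.continuousAt.preimage_mem_nhds
        simpa using hU
      obtain ⟨ε, hε, hball⟩ := Metric.mem_nhds_iff.1 hpre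
      set t : ℝ := min (ε / 2) 1 with ht'
      have ht0 : 0 < t := lt_min (by linarith) one_pos
      have ht1 : t ≤ 1 := min_le_right _ _
      set xt : X := x₀ + t • (x - x₀) with hxt'
      have hxtU : xt ∈ U := by
        apply hball
        simp only [Metric.mem_ball, Real.dist_eq, sub_zero]
        rw [abs_of_pos ht0]
        calc t ≤ ε / 2 := min_le_left _ _
          _ < ε := by linarith
      have hxteq : xt = (1 - t) • x₀ + t • x := by
        rw [hxt']; module
      have hxtC : xt ∈ C := by
        rw [hxteq]
        exact hC3 hxC hxCmem (by linarith) (le_of_lt ht0) (by ring)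
      -- convexity of g
      have hconv : g xt ≤ (((1 - t) * a + t * c : ℝ) : EReal) := by
        have h1 : (x₀, a) ∈ epigraph g := by simp [epigraph, hga]
        have h2 : (x, c) ∈ epigraph g := by simp [epigraph, hgc]
        have := hg3 h1 h2 (by linarith : (0:ℝ) ≤ 1 - t) (le_of_lt ht0) (by ring)
        simp only [epigraph, Prod.smul_mk, Prod.mk_add_mk, smul_eq_mul,
          Set.mem_setOf_eq] at this
        rwa [← hxteq] at this
      have hgxt_ne_top : g xt ≠ ⊤ := ne_top_of_le_ne_top (EReal.coe_ne_top _) hconv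
      set gt : ℝ := (g xt).toReal with hgt'
      have hggt : g xt = (gt : EReal) := (EReal.coe_toReal hgxt_ne_top (hg2.2 xt)).symm
      -- local minimality at xt
      have hdc : dcObj g h x₀ ≤ dcObj g h xt := hmin xt ⟨hxtC, hxtU⟩
      have hdc₀ : dcObj g h x₀ = ((a - b : ℝ) : EReal) := by
        simp only [dcObj, hga, hhb]
        rw [if_neg (by simp), ← EReal.coe_sub]
      have hdct : dcObj g h xt = g xt - h xt := by
        simp only [dcObj]
        rw [if_neg (by simp [hgxt_ne_top])]
      rw [hdc₀, hdct] at hdc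
      have hhxt_ne_top : h xt ≠ ⊤ := by
        intro htop
        rw [htop, hggt] at hdc
        rw [show ((gt : EReal) - ⊤) = ⊥ from rfl] at hdc
        exact (EReal.coe_ne_bot _) (le_bot_iff.1 hdc)
      set bt : ℝ := (h xt).toReal with hbt'
      have hhbt : h xt = (bt : EReal) := (EReal.coe_toReal hhxt_ne_top (hh2.2 xt)).symm
      -- real-valued inequalities
      have ineq1 : a - b ≤ gt - bt := by
        rw [hggt, hhbt, ← EReal.coe_sub] at hdc
        exact_mod_cast hdc
      have ineq2 : p xt - p x₀ ≤ bt - b := by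
        have := hp xt
        rw [hhbt, hhb, ← EReal.coe_sub] at this
        exact_mod_cast this
      have ineq3 : gt ≤ (1 - t) * a + t * c := by
        rw [hggt] at hconv
        exact_mod_cast hconv
      have hpxt : p xt - p x₀ = t * (p x - p x₀) := by
        rw [hxt']
        simp [map_add, map_smul, map_sub]
      have key : p x - p x₀ ≤ c - a := by
        rw [hpxt] at ineq2
        have : t * (p x - p x₀) ≤ t * (c - a) := by nlinarith
        exact le_of_mul_le_mul_left (by linarith) ht0
      rw [hga, hgc, ← EReal.coe_sub]
      exact_mod_cast key
  · have hind : indFn C x = ⊤ := by simp [indFn, hxCmem]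
    rw [hind]
    have : g x + ⊤ = ⊤ := EReal.add_top_of_ne_bot (hg2.2 x)
    rw [this, hga]
    rw [show (⊤ : EReal) - (a : EReal) = ⊤ from rfl]
    exact le_top
end

section
/- Let g, h: X → ℝ ∪ {+∞} be proper generalized polyhedral convex functions with representations g(x) = max_{i∈I}(⟨u_i*, x⟩ + α_i) for x ∈ dom g and h(x) = max_{j∈J}(⟨v_j*, x⟩ + β_j) for x ∈ dom h, and let C ⊆ X be a nonempty convex set. Then a point x̄ ∈ int(dom g) ∩ int(dom h) ∩ C is a local solution of the problem: minimize g(x) − h(x) subject to x ∈ C, if and only if co{v_j* : j ∈ J(x̄)} ⊆ co{u_i* : i ∈ I(x̄)} + N_C(x̄). -/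
open Pointwise Topology

lemma sup'_affine {σ : Type*} (s : Finset σ) (hs : s.Nonempty) (w : σ → ℝ) (c t : ℝ)
    (ht : 0 ≤ t) :
    s.sup' hs (fun i => c + t * w i) = c + t * s.sup' hs w := by
  obtain ⟨i₀, hi₀, h₀⟩ := s.exists_mem_eq_sup' hs w
  apply le_antisymm
  · refine Finset.sup'_le _ _ fun i hi => ?_
    have := Finset.le_sup' w hi
    nlinarith
  · rw [h₀]
    exact Finset.le_sup' (fun i => c + t * w i) hi₀

lemma simplex_sep {σ : Type*} [Fintype σ] [Nonempty σ] (E : Set ((σ → ℝ) × ℝ))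
    (hE : Convex ℝ E) (hne : E.Nonempty)
    (hdom : ∀ z ∈ E, z.2 ≤ Finset.univ.sup' Finset.univ_nonempty z.1) :
    ∃ lam : σ → ℝ, (∀ i, 0 ≤ lam i) ∧ (∑ i, lam i) = 1 ∧
      ∀ z ∈ E, z.2 ≤ ∑ i, lam i * z.1 i := by
  classical
  set M : Set ((σ → ℝ) × ℝ) := {z | ∀ i, z.1 i < z.2} with hM
  have hMopen : IsOpen M := by
    have : M = ⋂ i, {z : (σ → ℝ) × ℝ | z.1 i < z.2} := by
      ext z; simp [hM, Set.mem_iInter]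
    rw [this]
    exact isOpen_iInter_of_finite fun i =>
      isOpen_lt ((continuous_apply i).comp continuous_fst) continuous_snd
  have hMconv : Convex ℝ M := by
    intro z₁ h₁ z₂ h₂ t t' ht ht' htt
    intro i
    have e1 : (t • z₁ + t' • z₂).1 i = t * z₁.1 i + t' * z₂.1 i := rfl
    have e2 : (t • z₁ + t' • z₂).2 = t * z₁.2 + t' * z₂.2 := rfl
    rw [e1, e2]
    rcases eq_or_lt_of_le ht with rfl | ht0
    · rcases eq_or_lt_of_le ht' with rfl | ht0'
      · simp at htt
      · have := h₂ i; nlinarith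
    · rcases eq_or_lt_of_le ht' with rfl | ht0'
      · have := h₁ i; nlinarith
      · have := h₁ i; have := h₂ i; nlinarith
  have hdisj : Disjoint M E := by
    rw [Set.disjoint_left]
    intro z hzM hzE
    have := hdom z hzE
    have h2 := (Finset.sup'_lt_iff Finset.univ_nonempty).2 fun i _ => hzM i
    exact absurd this (not_le.2 h2)
  obtain ⟨f, c₀, hfM, hfE⟩ := geometric_hahn_banach_open hMconv hMopen hE hdisj
  set s : ℝ := f (0, 1) with hs_def
  set Φ : (σ → ℝ) →L[ℝ] ℝ := f.comp (ContinuousLinearMap.inl ℝ (σ → ℝ) ℝ) with hΦ_def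
  have hf : ∀ y t, f (y, t) = Φ y + t * s := by
    intro y t
    have : (y, t) = (y, (0:ℝ)) + t • ((0 : σ → ℝ), (1:ℝ)) := by
      simp [Prod.ext_iff]
    rw [this, map_add, map_smul, smul_eq_mul]
    rfl
  have hsup_def : ∀ y : σ → ℝ, Finset.univ.sup' Finset.univ_nonempty y =
      Finset.univ.sup' Finset.univ_nonempty y := fun _ => rfl
  -- (0, t) ∈ M for t > 0
  have hM0 : ∀ t : ℝ, 0 < t → t * s < c₀ := by
    intro t ht
    have : ((0 : σ → ℝ), t) ∈ M := fun i => by simpa using ht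
    have := hfM _ this
    rw [hf] at this
    simpa using this
  have hsle : s ≤ 0 := by
    by_contra hpos
    push_neg at hpos
    have h1 := hM0 ((max c₀ 0 + 1) / s) (div_pos (by positivity) hpos)
    rw [div_mul_cancel₀ _ (ne_of_gt hpos)] at h1
    have : c₀ ≤ max c₀ 0 := le_max_left _ _
    linarith
  -- key inequality
  have key : ∀ y : σ → ℝ, Φ y + s * Finset.univ.sup' Finset.univ_nonempty y ≤ 0 := by
    have keyc : ∀ y : σ → ℝ, Φ y + s * Finset.univ.sup' Finset.univ_nonempty y ≤ c₀ := by
      intro y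
      set S := Finset.univ.sup' Finset.univ_nonempty y with hS
      have hev : ∀ ε : ℝ, 0 < ε → Φ y + (S + ε) * s < c₀ := by
        intro ε hε
        have hmem : (y, S + ε) ∈ M := by
          intro i
          have : y i ≤ S := Finset.le_sup' y (Finset.mem_univ i)
          show y i < S + ε
          linarith
        have := hfM _ hmem
        rwa [hf] at this
      have htend : Filter.Tendsto (fun ε : ℝ => Φ y + (S + ε) * s) (nhdsWithin 0 (Set.Ioi 0))
          (nhds (Φ y + S * s)) := by
        have : Filter.Tendsto (fun ε : ℝ => Φ y + (S + ε) * s) (nhds 0)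
            (nhds (Φ y + (S + 0) * s)) := by
          exact (tendsto_const_nhds.add (((tendsto_const_nhds.add Filter.tendsto_id).mul
            tendsto_const_nhds)))
        simpa using this.mono_left nhdsWithin_le_nhds
      have := le_of_tendsto htend (Filter.eventually_of_mem self_mem_nhdsWithin
        fun ε hε => (hev ε hε).le)
      linarith [this]
    intro y
    by_contra hpos
    push_neg at hpos
    set B := Φ y + s * Finset.univ.sup' Finset.univ_nonempty y with hB
    have hr : ∀ r : ℝ, 0 < r → r * B ≤ c₀ := by
      intro r hr
      have h1 := keyc (r • y)
      have h2 : Φ (r • y) = r * Φ y := by rw [map_smul]; rfl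
      have h3 : Finset.univ.sup' Finset.univ_nonempty (r • y)
          = r * Finset.univ.sup' Finset.univ_nonempty y := by
        have := sup'_affine Finset.univ Finset.univ_nonempty y 0 r hr.le
        simpa using this
      rw [h2, h3] at h1
      have : r * B = r * Φ y + s * (r * Finset.univ.sup' Finset.univ_nonempty y) := by
        rw [hB]; ring
      linarith
    have h1 := hr ((max c₀ 0 + 1) / B) (div_pos (by positivity) hpos)
    rw [div_mul_cancel₀ _ (ne_of_gt hpos)] at h1
    have : c₀ ≤ max c₀ 0 := le_max_left _ _
    linarith
  have hsneg : s < 0 := by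
    rcases lt_or_eq_of_le hsle with h | h
    · exact h
    · exfalso
      have hΦ0 : ∀ y, Φ y = 0 := by
        intro y
        have h1 := key y
        have h2 := key (-y)
        have h3 : Φ (-y) = -Φ y := map_neg _ _
        rw [h, zero_mul, add_zero] at h1 h2
        rw [h3] at h2
        linarith
      obtain ⟨z₀, hz₀⟩ := hne
      have h1 := hfE z₀ hz₀
      have h1' : c₀ ≤ Φ z₀.1 + z₀.2 * s := by rw [← hf]; exact h1
      rw [hΦ0 z₀.1, h, mul_zero, add_zero] at h1'
      have h2 := hM0 1 one_pos
      rw [h, mul_zero] at h2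
      linarith
  have hc₀ : 0 ≤ c₀ := by
    by_contra hneg
    push_neg at hneg
    have hs0 : s ≠ 0 := ne_of_lt hsneg
    have h1 := hM0 (c₀ / (2 * s)) (div_pos_of_neg_of_neg hneg (by linarith))
    have e : c₀ / (2 * s) * s = c₀ / 2 := by field_simp
    rw [e] at h1
    linarith
  refine ⟨fun i => Φ (Pi.single i 1) / (-s), ?_, ?_, ?_⟩
  · intro i
    have h1 := key (-(Pi.single i 1))
    have h2 : Finset.univ.sup' Finset.univ_nonempty (-(Pi.single i 1) : σ → ℝ) ≤ 0 := by
      refine Finset.sup'_le _ _ fun k _ => ?_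
      by_cases hk : k = i <;> simp [hk, Pi.single_apply]
    have h3 : Φ (-(Pi.single i 1)) = -Φ (Pi.single i 1) := map_neg _ _
    rw [h3] at h1
    have : 0 ≤ Φ (Pi.single i 1) := by nlinarith
    exact div_nonneg this (by linarith)
  · have hones : Φ (fun _ => (1:ℝ)) = -s := by
      have h1 := key (fun _ => (1:ℝ))
      have h2 := key (fun _ => (-1:ℝ))
      have e1 : Finset.univ.sup' Finset.univ_nonempty (fun _ : σ => (1:ℝ)) = 1 :=
        Finset.sup'_const _ _
      have e2 : Finset.univ.sup' Finset.univ_nonempty (fun _ : σ => (-1:ℝ)) = -1 :=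
        Finset.sup'_const _ _
      have e3 : Φ (fun _ : σ => (-1:ℝ)) = -Φ (fun _ : σ => (1:ℝ)) := by
        rw [show (fun _ : σ => (-1:ℝ)) = -(fun _ : σ => (1:ℝ)) from rfl, map_neg]
      rw [e1] at h1
      rw [e2, e3] at h2
      linarith
    have hsum : ∑ i, Φ (Pi.single i 1) = -s := by
      rw [← map_sum]
      rw [show (∑ i, (Pi.single i (1:ℝ) : σ → ℝ)) = (fun _ : σ => (1:ℝ)) from ?_]
      · exact hones
      · funext k
        rw [Finset.sum_apply]
        simp [Pi.single_apply]
    rw [← Finset.sum_div, hsum, div_self (by linarith)]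
  · intro z hz
    have h1 := hfE z hz
    rw [show z = (z.1, z.2) from rfl, hf] at h1
    have hΦz : Φ z.1 = ∑ i, z.1 i * Φ (Pi.single i 1) := by
      have : z.1 = ∑ i, z.1 i • (Pi.single i (1:ℝ) : σ → ℝ) := by
        funext k
        rw [Finset.sum_apply]
        simp [Pi.single_apply]
      conv_lhs => rw [this]
      rw [map_sum]
      congr 1
      funext i
      rw [map_smul, smul_eq_mul]
    rw [hΦz] at h1
    have hmain : z.2 * (-s) ≤ ∑ i, z.1 i * Φ (Pi.single i 1) := by nlinarith
    have : z.2 ≤ (∑ i, z.1 i * Φ (Pi.single i 1)) / (-s) := by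
      rw [le_div_iff₀ (by linarith : (0:ℝ) < -s)]
      exact hmain
    calc z.2 ≤ (∑ i, z.1 i * Φ (Pi.single i 1)) / (-s) := this
      _ = ∑ i, Φ (Pi.single i 1) / (-s) * z.1 i := by
          rw [Finset.sum_div]; congr 1; funext i; ring

lemma active_exact {X τ : Type*} [AddCommGroup X] [Module ℝ X] [TopologicalSpace X]
    [IsTopologicalAddGroup X] [ContinuousSMul ℝ X]
    [Fintype τ] [Nonempty τ] (w : τ → (X →L[ℝ] ℝ)) (c : τ → ℝ) (x₀ : X)
    (T : Finset τ) (hTne : T.Nonempty)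
    (hT : ∀ k, k ∈ T ↔ w k x₀ + c k
      = Finset.univ.sup' Finset.univ_nonempty (fun k => w k x₀ + c k)) :
    ∃ V : Set X, IsOpen V ∧ x₀ ∈ V ∧ ∀ x ∈ V,
      Finset.univ.sup' Finset.univ_nonempty (fun k => w k x + c k)
        = T.sup' hTne (fun k => w k x + c k) := by
  classical
  set F : X → ℝ := fun x => Finset.univ.sup' Finset.univ_nonempty (fun k => w k x + c k)
    with hF
  set V : Set X := ⋂ k : τ, if k ∈ T then Set.univ else
      ⋃ k' ∈ T, {x : X | w k x + c k < w k' x + c k'} with hV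
  have hcont : ∀ k : τ, Continuous fun x : X => w k x + c k := fun k =>
    (w k).continuous.add continuous_const
  refine ⟨V, ?_, ?_, ?_⟩
  · refine isOpen_iInter_of_finite fun k => ?_
    split_ifs
    · exact isOpen_univ
    · exact isOpen_biUnion fun k' _ => isOpen_lt (hcont k) (hcont k')
  · rw [hV, Set.mem_iInter]
    intro k
    split_ifs with hk
    · trivial
    · obtain ⟨k₀, _, hk₀⟩ := Finset.exists_mem_eq_sup' Finset.univ_nonempty
        (fun k => w k x₀ + c k)
      have hk₀T : k₀ ∈ T := (hT k₀).2 hk₀.symm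
      have hlt : w k x₀ + c k < w k₀ x₀ + c k₀ := by
        have hle : w k x₀ + c k ≤ F x₀ := Finset.le_sup' (fun k => w k x₀ + c k) (Finset.mem_univ k)
        have hne : w k x₀ + c k ≠ F x₀ := fun hh => hk ((hT k).2 hh)
        rw [← hk₀]
        exact lt_of_le_of_ne hle hne
      exact Set.mem_biUnion hk₀T hlt
  · intro x hx
    apply le_antisymm
    · obtain ⟨k₁, _, hk₁⟩ := Finset.exists_mem_eq_sup' Finset.univ_nonempty
        (fun k => w k x + c k)
      rw [hk₁]
      by_cases hk : k₁ ∈ T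
      · exact Finset.le_sup' (fun k => w k x + c k) hk
      · have hx' := Set.mem_iInter.1 hx k₁
        rw [if_neg hk] at hx'
        obtain ⟨k', hk'T, hk'lt⟩ := by
          simpa using hx'
        exact le_of_lt (lt_of_lt_of_le hk'lt (Finset.le_sup' (fun k => w k x + c k) hk'T))
    · exact Finset.sup'_le _ _ fun k _ => Finset.le_sup' (fun k => w k x + c k) (Finset.mem_univ k)

lemma sup'_subtype {τ : Type*} (s : Finset τ) (hs : s.Nonempty) (f : τ → ℝ)
    (H : (Finset.univ : Finset {k // k ∈ s}).Nonempty) :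
    (Finset.univ : Finset {k // k ∈ s}).sup' H (fun k => f k.1) = s.sup' hs f := by
  apply le_antisymm
  · exact Finset.sup'_le _ _ fun k _ => Finset.le_sup' f k.2
  · obtain ⟨k₀, hk₀, h₀⟩ := s.exists_mem_eq_sup' hs f
    rw [h₀]
    exact Finset.le_sup' (fun k : {k // k ∈ s} => f k.1) (Finset.mem_univ ⟨k₀, hk₀⟩)

/-- characterization of local solutions of a gpdc program via convex hulls
of active gradients and the normal cone. -/
theorem stmt2 {X : Type*} [AddCommGroup X] [Module ℝ X] [TopologicalSpace X]
    [IsTopologicalAddGroup X] [ContinuousSMul ℝ X] [LocallyConvexSpace ℝ X] [T2Space X]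
    (ι κ : Type*) [Fintype ι] [Nonempty ι] [Fintype κ] [Nonempty κ]
    (u : ι → (X →L[ℝ] ℝ)) (a : ι → ℝ) (v : κ → (X →L[ℝ] ℝ)) (b : κ → ℝ)
    (g h : X → EReal)
    (hg2 : ProperFn g) (hg3 : IsGPCF X g)
    (hh2 : ProperFn h) (hh3 : IsGPCF X h)
    (hgrep : ∀ x ∈ domFn g,
      g x = ((Finset.univ.sup' Finset.univ_nonempty fun i => u i x + a i : ℝ) : EReal))
    (hhrep : ∀ x ∈ domFn h,
      h x = ((Finset.univ.sup' Finset.univ_nonempty fun j => v j x + b j : ℝ) : EReal))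
    (C : Set X) (hC1 : C.Nonempty) (hC3 : Convex ℝ C)
    (x₀ : X) (hx₀ : x₀ ∈ interior (domFn g) ∩ interior (domFn h) ∩ C) :
    IsLocalSolution g h C x₀ ↔
      convexHull ℝ (v '' {j : κ | ((v j x₀ + b j : ℝ) : EReal) = h x₀}) ⊆
        convexHull ℝ (u '' {i : ι | ((u i x₀ + a i : ℝ) : EReal) = g x₀}) +
          normalConeAt C x₀ := by
  classical
  obtain ⟨⟨hxg, hxh⟩, hxC⟩ := hx₀
  have hxg' : x₀ ∈ domFn g := interior_subset hxg
  have hxh' : x₀ ∈ domFn h := interior_subset hxh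
  set G : X → ℝ := fun x => Finset.univ.sup' Finset.univ_nonempty (fun i => u i x + a i)
    with hG
  set H : X → ℝ := fun x => Finset.univ.sup' Finset.univ_nonempty (fun j => v j x + b j)
    with hH
  have hGx : ∀ x, G x = Finset.univ.sup' Finset.univ_nonempty (fun i => u i x + a i) :=
    fun x => rfl
  have hHx : ∀ x, H x = Finset.univ.sup' Finset.univ_nonempty (fun j => v j x + b j) :=
    fun x => rfl
  have hgrep' : ∀ x ∈ domFn g, g x = ((G x : ℝ) : EReal) := fun x hx => hgrep x hx
  have hhrep' : ∀ x ∈ domFn h, h x = ((H x : ℝ) : EReal) := fun x hx => hhrep x hx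
  have hg0 : g x₀ = ((G x₀ : ℝ) : EReal) := hgrep' x₀ hxg'
  have hh0 : h x₀ = ((H x₀ : ℝ) : EReal) := hhrep' x₀ hxh'
  set Ia : Finset ι := Finset.univ.filter (fun i => u i x₀ + a i = G x₀) with hIa
  set Jb : Finset κ := Finset.univ.filter (fun j => v j x₀ + b j = H x₀) with hJb
  have hIa_mem : ∀ i, i ∈ Ia ↔ u i x₀ + a i = G x₀ := fun i => by simp [hIa]
  have hJb_mem : ∀ j, j ∈ Jb ↔ v j x₀ + b j = H x₀ := fun j => by simp [hJb]
  have hIane : Ia.Nonempty := by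
    obtain ⟨i₀, _, h₀⟩ := Finset.exists_mem_eq_sup' Finset.univ_nonempty
      (fun i => u i x₀ + a i)
    exact ⟨i₀, (hIa_mem i₀).2 h₀.symm⟩
  have hJbne : Jb.Nonempty := by
    obtain ⟨j₀, _, h₀⟩ := Finset.exists_mem_eq_sup' Finset.univ_nonempty
      (fun j => v j x₀ + b j)
    exact ⟨j₀, (hJb_mem j₀).2 h₀.symm⟩
  have hIset : {i : ι | ((u i x₀ + a i : ℝ) : EReal) = g x₀} = (Ia : Set ι) := by
    ext i
    rw [Set.mem_setOf_eq, hg0, EReal.coe_eq_coe_iff, Finset.mem_coe, hIa_mem]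
  have hJset : {j : κ | ((v j x₀ + b j : ℝ) : EReal) = h x₀} = (Jb : Set κ) := by
    ext j
    rw [Set.mem_setOf_eq, hh0, EReal.coe_eq_coe_iff, Finset.mem_coe, hJb_mem]
  obtain ⟨Vg, hVgopen, hVgx₀, hVg⟩ := active_exact u a x₀ Ia hIane (fun i => hIa_mem i)
  obtain ⟨Vh, hVhopen, hVhx₀, hVh⟩ := active_exact v b x₀ Jb hJbne (fun j => hJb_mem j)
  have hVg' : ∀ x ∈ Vg, G x = Ia.sup' hIane (fun i => u i x + a i) := fun x hx => hVg x hx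
  have hVh' : ∀ x ∈ Vh, H x = Jb.sup' hJbne (fun j => v j x + b j) := fun x hx => hVh x hx
  have hdc : ∀ x, x ∈ domFn g → x ∈ domFn h → dcObj g h x = ((G x - H x : ℝ) : EReal) := by
    intro x hx1 hx2
    have e1 := hgrep' x hx1
    have e2 := hhrep' x hx2
    unfold dcObj
    rw [if_neg (fun hcon => EReal.coe_ne_top (G x) (e1 ▸ hcon.1)), e1, e2]
    exact (EReal.coe_sub _ _).symm
  have hNconv : Convex ℝ (normalConeAt C x₀) := by
    intro w₁ h₁ w₂ h₂ t t' ht ht' htt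
    intro x hx
    have e : (t • w₁ + t' • w₂) x - (t • w₁ + t' • w₂) x₀
        = t * (w₁ x - w₁ x₀) + t' * (w₂ x - w₂ x₀) := by
      simp only [ContinuousLinearMap.add_apply, ContinuousLinearMap.smul_apply, smul_eq_mul]
      ring
    rw [e]
    have m1 := mul_le_mul_of_nonneg_left (h₁ x hx) ht
    have m2 := mul_le_mul_of_nonneg_left (h₂ x hx) ht'
    nlinarith
  constructor
  · -- forward direction
    rintro ⟨-, U, hUnhds, hloc⟩
    have star : ∀ j, v j x₀ + b j = H x₀ → ∀ c ∈ C,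
        v j (c - x₀) ≤ Ia.sup' hIane (fun i => u i (c - x₀)) := by
      intro j hj c hc
      set d : X := c - x₀ with hd
      set O : Set X := interior (domFn g) ∩ interior (domFn h) ∩ Vg with hO
      have hOnhds : U ∩ O ∈ nhds x₀ := by
        refine Filter.inter_mem hUnhds ?_
        exact (((isOpen_interior.inter isOpen_interior).inter hVgopen).mem_nhds
          ⟨⟨hxg, hxh⟩, hVgx₀⟩)
      have htend : Filter.Tendsto (fun t : ℝ => x₀ + t • d) (nhds 0) (nhds x₀) := by
        have : Filter.Tendsto (fun t : ℝ => x₀ + t • d) (nhds 0) (nhds (x₀ + (0:ℝ) • d)) :=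
          tendsto_const_nhds.add (Filter.tendsto_id.smul tendsto_const_nhds)
        simpa using this
      have hev1 : ∀ᶠ t : ℝ in nhds 0, x₀ + t • d ∈ U ∩ O := htend.eventually_mem hOnhds
      have hev2 : ∀ᶠ t : ℝ in nhds 0, t < 1 := by
        have : Set.Iio (1:ℝ) ∈ nhds (0:ℝ) := Iio_mem_nhds one_pos
        exact this
      have hev3 : ∀ᶠ t : ℝ in nhdsWithin 0 (Set.Ioi 0),
          (x₀ + t • d ∈ U ∩ O ∧ t < 1) ∧ 0 < t := by
        refine Filter.Eventually.and ?_ ?_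
        · exact ((hev1.and hev2).filter_mono nhdsWithin_le_nhds)
        · exact Filter.eventually_of_mem self_mem_nhdsWithin fun t ht => ht
      obtain ⟨t, ⟨⟨hmem, ht1⟩, ht0⟩⟩ := hev3.exists
      obtain ⟨hxtU, ⟨hxtg, hxth⟩, hxtVg⟩ := hmem
      set xt : X := x₀ + t • d with hxt
      have hxtC : xt ∈ C := by
        have e : xt = (1 - t) • x₀ + t • c := by
          rw [hxt, hd, smul_sub, sub_smul, one_smul]
          abel
        rw [e]
        exact hC3 hxC hc (by linarith) (le_of_lt ht0) (by ring)
      have hGxt : G xt = G x₀ + t * Ia.sup' hIane (fun i => u i d) := by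
        have e1 : ∀ i ∈ Ia, u i xt + a i = G x₀ + t * u i d := by
          intro i hi
          have hi' := (hIa_mem i).1 hi
          rw [hxt]
          simp only [map_add, map_smul, smul_eq_mul]
          linarith
        rw [hVg' xt hxtVg, Finset.sup'_congr hIane rfl e1,
          sup'_affine Ia hIane (fun i => u i d) (G x₀) t (le_of_lt ht0)]
      have hHxt_ge : H x₀ + t * v j d ≤ H xt := by
        have e : v j xt + b j = H x₀ + t * v j d := by
          rw [hxt]
          simp only [map_add, map_smul, smul_eq_mul]
          linarith
        rw [← e, hHx xt]
        exact Finset.le_sup' (fun j => v j xt + b j) (Finset.mem_univ j)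
      have hcomp := hloc xt ⟨hxtC, hxtU⟩
      rw [hdc x₀ hxg' hxh', hdc xt (interior_subset hxtg) (interior_subset hxth),
        EReal.coe_le_coe_iff] at hcomp
      have hmul : t * v j d ≤ t * Ia.sup' hIane (fun i => u i d) := by linarith
      exact le_of_mul_le_mul_left hmul ht0
    refine convexHull_min ?_ ((convex_convexHull ℝ _).add hNconv)
    rintro - ⟨j, hj, rfl⟩
    rw [hJset, Finset.mem_coe] at hj
    have hj' : v j x₀ + b j = H x₀ := (hJb_mem j).1 hj
    haveI hσne : Nonempty {i // i ∈ Ia} := Finset.nonempty_coe_sort.2 hIane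
    set E : Set (({i // i ∈ Ia} → ℝ) × ℝ) :=
      (fun x : X => ((fun i : {i // i ∈ Ia} => u i.1 (x - x₀)), v j (x - x₀))) '' C
      with hE_def
    have hEconv : Convex ℝ E := by
      rintro - ⟨c₁, hc₁, rfl⟩ - ⟨c₂, hc₂, rfl⟩ t t' ht ht' htt
      refine ⟨t • c₁ + t' • c₂, hC3 hc₁ hc₂ ht ht' htt, ?_⟩
      have h1 : t' = 1 - t := by linarith
      subst h1
      simp only [Prod.smul_mk, Prod.mk_add_mk, Prod.mk.injEq]
      constructor
      · funext i
        simp only [Pi.add_apply, Pi.smul_apply, smul_eq_mul, map_sub, map_add, map_smul]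
        ring
      · simp only [smul_eq_mul, map_sub, map_add, map_smul]
        ring
    have hEne : E.Nonempty := by
      obtain ⟨c0, hc0⟩ := hC1
      exact ⟨_, Set.mem_image_of_mem _ hc0⟩
    have hEdom : ∀ z ∈ E, z.2 ≤ Finset.univ.sup' Finset.univ_nonempty z.1 := by
      rintro - ⟨c, hc, rfl⟩
      have h1 := star j hj' c hc
      have h2 := sup'_subtype Ia hIane (fun i => u i (c - x₀)) Finset.univ_nonempty
      show v j (c - x₀) ≤ Finset.univ.sup' Finset.univ_nonempty
        (fun i : {i // i ∈ Ia} => u i.1 (c - x₀))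
      exact le_of_le_of_eq h1 h2.symm
    obtain ⟨lam, hlam0, hlam1, hlam2⟩ := simplex_sep E hEconv hEne hEdom
    set q : X →L[ℝ] ℝ := ∑ i : {i // i ∈ Ia}, lam i • u i.1 with hq_def
    have hqmem : q ∈ convexHull ℝ (u '' {i : ι | ((u i x₀ + a i : ℝ) : EReal) = g x₀}) := by
      rw [hIset]
      have hmem := Finset.centerMass_mem_convexHull (Finset.univ : Finset {i // i ∈ Ia})
        (fun i _ => hlam0 i) (by rw [hlam1]; norm_num)
        (fun i _ => Set.mem_image_of_mem u (Finset.mem_coe.2 i.2))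
      rwa [Finset.centerMass_eq_of_sum_1 _ _ hlam1] at hmem
    have hpmem : v j - q ∈ normalConeAt C x₀ := by
      intro x hx
      have hzE : ((fun i : {i // i ∈ Ia} => u i.1 (x - x₀)), v j (x - x₀)) ∈ E :=
        ⟨x, hx, rfl⟩
      have h1 := hlam2 _ hzE
      simp only at h1
      have h1' : v j x - v j x₀ ≤ ∑ i : {i // i ∈ Ia}, lam i * (u i.1 x - u i.1 x₀) := by
        simpa only [map_sub] using h1
      have hsplit : ∑ i : {i // i ∈ Ia}, lam i * (u i.1 x - u i.1 x₀)
          = (∑ i : {i // i ∈ Ia}, lam i * u i.1 x)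
            - ∑ i : {i // i ∈ Ia}, lam i * u i.1 x₀ := by
        rw [← Finset.sum_sub_distrib]
        congr 1; funext i; ring
      have hqx : ∀ y : X, q y = ∑ i : {i // i ∈ Ia}, lam i * u i.1 y := by
        intro y
        rw [hq_def]
        simp [ContinuousLinearMap.sum_apply, ContinuousLinearMap.smul_apply, smul_eq_mul]
      show (v j - q) x - (v j - q) x₀ ≤ 0
      simp only [ContinuousLinearMap.sub_apply]
      linarith [h1', hsplit, hqx x, hqx x₀]
    have e : q + (v j - q) = v j := by abel
    rw [← e]
    exact Set.add_mem_add hqmem hpmem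
  · -- backward direction
    intro hinc
    refine ⟨hxC, interior (domFn g) ∩ interior (domFn h) ∩ Vh, ?_, ?_⟩
    · exact (((isOpen_interior.inter isOpen_interior).inter hVhopen).mem_nhds
        ⟨⟨hxg, hxh⟩, hVhx₀⟩)
    · rintro x ⟨hxc, ⟨hxg2, hxh2⟩, hxVh⟩
      have hxgd : x ∈ domFn g := interior_subset hxg2
      have hxhd : x ∈ domFn h := interior_subset hxh2
      rw [hdc x₀ hxg' hxh', hdc x hxgd hxhd, EReal.coe_le_coe_iff]
      obtain ⟨j₁, hj₁T, hj₁⟩ := Jb.exists_mem_eq_sup' hJbne (fun j => v j x + b j)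
      have hHxx : H x = v j₁ x + b j₁ := by rw [hVh' x hxVh]; exact hj₁
      have hHx₀ : v j₁ x₀ + b j₁ = H x₀ := (hJb_mem j₁).1 hj₁T
      have hvmem : v j₁ ∈ convexHull ℝ
          (v '' {j : κ | ((v j x₀ + b j : ℝ) : EReal) = h x₀}) := by
        apply subset_convexHull
        refine Set.mem_image_of_mem v ?_
        rw [hJset]
        exact hj₁T
      obtain ⟨q, hq, p, hp, hqp⟩ := Set.mem_add.1 (hinc hvmem)
      have hqb : q x - q x₀ ≤ G x - G x₀ := by
        have hsub : u '' {i : ι | ((u i x₀ + a i : ℝ) : EReal) = g x₀} ⊆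
            {w : X →L[ℝ] ℝ | w x - w x₀ ≤ G x - G x₀} := by
          rintro - ⟨i, hi, rfl⟩
          rw [hIset] at hi
          have hi' : u i x₀ + a i = G x₀ := (hIa_mem i).1 hi
          have hle : u i x + a i ≤ G x := by
            rw [hGx x]
            exact Finset.le_sup' (fun i => u i x + a i) (Finset.mem_univ i)
          show u i x - u i x₀ ≤ G x - G x₀
          linarith
        have hconv : Convex ℝ {w : X →L[ℝ] ℝ | w x - w x₀ ≤ G x - G x₀} := by
          intro w₁ h₁ w₂ h₂ t t' ht ht' htt
          show (t • w₁ + t' • w₂) x - (t • w₁ + t' • w₂) x₀ ≤ G x - G x₀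
          have e : (t • w₁ + t' • w₂) x - (t • w₁ + t' • w₂) x₀
              = t * (w₁ x - w₁ x₀) + t' * (w₂ x - w₂ x₀) := by
            simp only [ContinuousLinearMap.add_apply, ContinuousLinearMap.smul_apply,
              smul_eq_mul]
            ring
          rw [e]
          have m1 := mul_le_mul_of_nonneg_left h₁ ht
          have m2 := mul_le_mul_of_nonneg_left h₂ ht'
          have msum : t * (G x - G x₀) + t' * (G x - G x₀) = G x - G x₀ := by
            rw [← add_mul, htt, one_mul]
          linarith
        exact convexHull_min hsub hconv hq
      have hpb : p x - p x₀ ≤ 0 := hp x hxc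
      have e : v j₁ x - v j₁ x₀ = (q x - q x₀) + (p x - p x₀) := by
        rw [← hqp]
        simp only [ContinuousLinearMap.add_apply]
        ring
      linarith [hHxx, hHx₀, e.le, e.ge]
end

section
/- Let g, h: X → ℝ ∪ {+∞} be proper generalized polyhedral convex functions with representations g(x) = max_{i∈I}(⟨u_i*, x⟩ + α_i) for x ∈ dom g and h(x) = max_{j∈J}(⟨v_j*, x⟩ + β_j) for x ∈ dom h. Let C = {x ∈ X : A(x) = y, ⟨x_k*, x⟩ ≤ α_k, k = 1, …, p} be nonempty, where A: X → Y is a continuous surjective linear map into a locally convex Hausdorff topological vector space Y, y ∈ Y, x_k* ∈ X*, α_k ∈ ℝ. Then a point x̄ ∈ int(dom g) ∩ int(dom h) ∩ C is a local solution of the problem: minimize g(x) − h(x) subject to x ∈ C, if and only if co{v_j* : j ∈ J(x̄)} ⊆ co{u_i* : i ∈ I(x̄)} + pos{x_k* : k ∈ K(x̄)} + (ker A)^⊥, where K(x̄) = {k ∈ {1,…,p} : ⟨x_k*, x̄⟩ = α_k}. -/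
open Pointwise Topology Filter

section Farkas
universe u

theorem farkas_aux (n : ℕ) : ∀ (V : Type u) [AddCommGroup V] [Module ℝ V]
    (f : Fin n → V →ₗ[ℝ] ℝ) (g : V →ₗ[ℝ] ℝ),
    (∀ x, (∀ i, f i x ≤ 0) → g x ≤ 0) →
    ∃ lam : Fin n → ℝ, (∀ i, 0 ≤ lam i) ∧ g = ∑ i, lam i • f i := by
  induction n with
  | zero =>
    intro V _ _ f g hyp
    refine ⟨fun i => 0, fun i => le_rfl, ?_⟩
    have : ∀ x, g x = 0 := by
      intro x
      have h1 : g x ≤ 0 := hyp x (fun i => i.elim0)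
      have h2 : g (-x) ≤ 0 := hyp (-x) (fun i => i.elim0)
      simp at h2; linarith
    ext x; simp [this x]
  | succ n ih =>
    intro V _ _ f g hyp
    set fl := f (Fin.last n) with hfl
    set U := LinearMap.ker fl with hU
    have hyp' : ∀ x : U, (∀ i : Fin n, ((f i.castSucc).comp U.subtype) x ≤ 0) →
        (g.comp U.subtype) x ≤ 0 := by
      intro x hx
      refine hyp x ?_
      intro i
      refine Fin.lastCases ?_ ?_ i
      · have := x.2
        simp only [hU, LinearMap.mem_ker] at this
        simp [← hfl, this]
      · intro j; exact hx j
    obtain ⟨lam', hlam'0, hlam'⟩ := ih U (fun i => (f i.castSucc).comp U.subtype)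
      (g.comp U.subtype) hyp'
    set g2 : V →ₗ[ℝ] ℝ := g - ∑ i : Fin n, lam' i • f i.castSucc with hg2
    have hg2ker : ∀ x ∈ U, g2 x = 0 := by
      intro x hx
      have := congrArg (fun φ => φ ⟨x, hx⟩) hlam'
      simp only [LinearMap.comp_apply, Submodule.subtype_apply] at this
      simp only [hg2, LinearMap.sub_apply, LinearMap.sum_apply, LinearMap.smul_apply, LinearMap.add_apply,
        smul_eq_mul]
      rw [this]
      simp
    have hmu : ∃ μ : ℝ, ∀ x, g2 x = μ * fl x := by
      by_cases hfl0 : ∀ x, fl x = 0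
      · refine ⟨0, fun x => ?_⟩
        have : x ∈ U := by simp [hU, LinearMap.mem_ker, hfl0 x]
        rw [hg2ker x this, hfl0 x]; ring
      · push_neg at hfl0
        obtain ⟨x₀, hx₀⟩ := hfl0
        set x₁ := (fl x₀)⁻¹ • x₀ with hx₁
        have hflx₁ : fl x₁ = 1 := by
          simp [hx₁, inv_mul_cancel₀ hx₀]
        refine ⟨g2 x₁, fun x => ?_⟩
        have hker : x - fl x • x₁ ∈ U := by
          simp [hU, LinearMap.mem_ker, hflx₁]
        have := hg2ker _ hker
        simp only [map_sub, map_smul, smul_eq_mul] at this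
        linarith [this]
    obtain ⟨μ, hμ⟩ := hmu
    by_cases hμ0 : 0 ≤ μ
    · refine ⟨Fin.snoc lam' μ, ?_, ?_⟩
      · intro i
        refine Fin.lastCases ?_ ?_ i
        · simp [hμ0]
        · intro j; simp [Fin.snoc_castSucc]; exact hlam'0 j
      · ext x
        rw [Fin.sum_univ_castSucc]
        have := hμ x
        simp only [hg2, LinearMap.sub_apply, LinearMap.sum_apply, LinearMap.smul_apply, LinearMap.add_apply,
          smul_eq_mul] at this ⊢
        simp only [Fin.snoc_castSucc, Fin.snoc_last]
        linarith [this]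
    · push_neg at hμ0
      have hyp2 : ∀ x, (∀ i : Fin n, f i.castSucc x ≤ 0) → g x ≤ 0 := by
        intro x hx
        by_cases hflx : fl x ≤ 0
        · refine hyp x ?_
          intro i
          refine Fin.lastCases (by simpa [← hfl] using hflx) (fun j => hx j) i
        · push_neg at hflx
          have h1 : g2 x = μ * fl x := hμ x
          have h2 : μ * fl x < 0 := mul_neg_of_neg_of_pos hμ0 hflx
          have h3 : (∑ i : Fin n, lam' i • f i.castSucc) x ≤ 0 := by
            simp only [LinearMap.sum_apply, LinearMap.smul_apply, smul_eq_mul]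
            exact Finset.sum_nonpos fun i _ => mul_nonpos_of_nonneg_of_nonpos (hlam'0 i) (hx i)
          simp only [hg2, LinearMap.sub_apply] at h1
          linarith
      obtain ⟨lam'', h0, hsum⟩ := ih V (fun i => f i.castSucc) g hyp2
      refine ⟨Fin.snoc lam'' 0, ?_, ?_⟩
      · intro i
        refine Fin.lastCases (by simp) (fun j => by simp [Fin.snoc_castSucc]; exact h0 j) i
      · ext x
        rw [Fin.sum_univ_castSucc]
        have := congrArg (fun φ => φ x) hsum
        simp only [LinearMap.sum_apply, LinearMap.smul_apply, LinearMap.add_apply, smul_eq_mul] at this ⊢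
        simp only [Fin.snoc_castSucc, Fin.snoc_last]
        simpa using this

theorem farkas {V : Type u} [AddCommGroup V] [Module ℝ V] {ι : Type*} [Fintype ι]
    (f : ι → V →ₗ[ℝ] ℝ) (g : V →ₗ[ℝ] ℝ)
    (hyp : ∀ x, (∀ i, f i x ≤ 0) → g x ≤ 0) :
    ∃ lam : ι → ℝ, (∀ i, 0 ≤ lam i) ∧ g = ∑ i, lam i • f i := by
  obtain ⟨lam, h0, hs⟩ := farkas_aux (Fintype.card ι) V
    (fun k => f ((Fintype.equivFin ι).symm k)) g
    (fun x hx => hyp x (fun i => by simpa using hx ((Fintype.equivFin ι) i)))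
  refine ⟨fun i => lam ((Fintype.equivFin ι) i), fun i => h0 _, ?_⟩
  rw [hs]
  exact (Fintype.sum_equiv (Fintype.equivFin ι)
    (fun i => lam ((Fintype.equivFin ι) i) • f i)
    (fun k => lam k • f ((Fintype.equivFin ι).symm k)) (fun x => by simp)).symm

end Farkas



open Pointwise Topology

set_option maxHeartbeats 1000000 in
open Classical in
/-- characterization of local solutions of a gpdc program with an explicitly
described generalized polyhedral convex constraint set. -/
theorem stmt3 {X : Type*} [AddCommGroup X] [Module ℝ X] [TopologicalSpace X]
    [IsTopologicalAddGroup X] [ContinuousSMul ℝ X] [LocallyConvexSpace ℝ X] [T2Space X]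
    {Y : Type*} [AddCommGroup Y] [Module ℝ Y] [TopologicalSpace Y]
    [IsTopologicalAddGroup Y] [ContinuousSMul ℝ Y] [LocallyConvexSpace ℝ Y] [T2Space Y]
    (ι κ : Type*) [Fintype ι] [Nonempty ι] [Fintype κ] [Nonempty κ]
    (u : ι → (X →L[ℝ] ℝ)) (a : ι → ℝ) (v : κ → (X →L[ℝ] ℝ)) (b : κ → ℝ)
    (g h : X → EReal)
    (hg2 : ProperFn g) (hg3 : IsGPCF X g)
    (hh2 : ProperFn h) (hh3 : IsGPCF X h)
    (hgrep : ∀ x ∈ domFn g,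
      g x = ((Finset.univ.sup' Finset.univ_nonempty fun i => u i x + a i : ℝ) : EReal))
    (hhrep : ∀ x ∈ domFn h,
      h x = ((Finset.univ.sup' Finset.univ_nonempty fun j => v j x + b j : ℝ) : EReal))
    (A : X →L[ℝ] Y) (hA : Function.Surjective A) (y : Y)
    (p : ℕ) (xs : Fin p → (X →L[ℝ] ℝ)) (c : Fin p → ℝ)
    (C : Set X) (hCdef : C = {x : X | A x = y ∧ ∀ k, xs k x ≤ c k}) (hC1 : C.Nonempty)
    (x₀ : X) (hx₀ : x₀ ∈ interior (domFn g) ∩ interior (domFn h) ∩ C) :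
    IsLocalSolution g h C x₀ ↔
      convexHull ℝ (v '' {j : κ | ((v j x₀ + b j : ℝ) : EReal) = h x₀}) ⊆
        convexHull ℝ (u '' {i : ι | ((u i x₀ + a i : ℝ) : EReal) = g x₀}) +
          {w : X →L[ℝ] ℝ | ∃ lam : Fin p → ℝ, (∀ k, 0 ≤ lam k) ∧
            w = ∑ k ∈ Finset.univ.filter (fun k => xs k x₀ = c k), lam k • xs k} +
          {w : X →L[ℝ] ℝ | ∀ z : X, A z = 0 → w z = 0} := by
  -- notation
  set Gr : X → ℝ := fun x => Finset.univ.sup' Finset.univ_nonempty fun i => u i x + a i with hGr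
  set Hr : X → ℝ := fun x => Finset.univ.sup' Finset.univ_nonempty fun j => v j x + b j with hHr
  obtain ⟨⟨hx₀g, hx₀h⟩, hx₀C⟩ := hx₀
  have hx₀dg : x₀ ∈ domFn g := interior_subset hx₀g
  have hx₀dh : x₀ ∈ domFn h := interior_subset hx₀h
  have hgx₀ : g x₀ = ((Gr x₀ : ℝ) : EReal) := hgrep x₀ hx₀dg
  have hhx₀ : h x₀ = ((Hr x₀ : ℝ) : EReal) := hhrep x₀ hx₀dh
  -- active sets
  have hIset : {i : ι | ((u i x₀ + a i : ℝ) : EReal) = g x₀} = {i | u i x₀ + a i = Gr x₀} := by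
    ext i; rw [Set.mem_setOf_eq, Set.mem_setOf_eq, hgx₀, EReal.coe_eq_coe_iff]
  have hJset : {j : κ | ((v j x₀ + b j : ℝ) : EReal) = h x₀} = {j | v j x₀ + b j = Hr x₀} := by
    ext j; rw [Set.mem_setOf_eq, Set.mem_setOf_eq, hhx₀, EReal.coe_eq_coe_iff]
  -- dcObj is real on the domains
  have hdc : ∀ x, x ∈ domFn g → x ∈ domFn h → dcObj g h x = (((Gr x - Hr x : ℝ)) : EReal) := by
    intro x hxg hxh
    have h1 := hgrep x hxg
    have h2 := hhrep x hxh
    rw [dcObj, if_neg (fun hc => hxg hc.1), h1, h2, ← EReal.coe_sub]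
  -- active index nonempty for g
  have hIgne : ∃ i, u i x₀ + a i = Gr x₀ := by
    obtain ⟨i, _, hi⟩ := Finset.exists_mem_eq_sup' (Finset.univ_nonempty (α := ι))
      (fun i => u i x₀ + a i)
    exact ⟨i, hi.symm⟩
  set IgF : Finset ι := Finset.univ.filter (fun i => u i x₀ + a i = Gr x₀) with hIgF
  have hIgFne : IgF.Nonempty := by
    obtain ⟨i, hi⟩ := hIgne
    exact ⟨i, by simp [hIgF, hi]⟩
  have hterm_le : ∀ (i : ι) (x : X), u i x + a i ≤ Gr x := fun i x =>
    Finset.le_sup' (fun i => u i x + a i) (Finset.mem_univ i)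
  have htermh_le : ∀ (j : κ) (x : X), v j x + b j ≤ Hr x := fun j x =>
    Finset.le_sup' (fun j => v j x + b j) (Finset.mem_univ j)
  have hCx₀ : A x₀ = y ∧ ∀ k, xs k x₀ ≤ c k := by rwa [hCdef] at hx₀C
  rw [hIset, hJset]
  constructor
  · -- forward direction
    rintro ⟨-, U', hU', hmin⟩
    have hW : interior (domFn g) ∩ interior (domFn h) ∩ U' ∈ 𝓝 x₀ :=
      Filter.inter_mem (Filter.inter_mem (isOpen_interior.mem_nhds hx₀g)
        (isOpen_interior.mem_nhds hx₀h)) hU'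
    set W := interior (domFn g) ∩ interior (domFn h) ∩ U' with hWdef
    set M : X → ℝ := fun d => IgF.sup' hIgFne fun i => u i d with hM
    -- key directional inequality
    have key : ∀ d : X, A d = 0 → (∀ k, xs k x₀ = c k → xs k d ≤ 0) →
        ∀ j, v j x₀ + b j = Hr x₀ → v j d ≤ M d := by
      intro d hAd hxsd j hj
      have hcont : Continuous (fun t : ℝ => x₀ + t • d) := by continuity
      have htend : Tendsto (fun t : ℝ => x₀ + t • d) (𝓝 0) (𝓝 x₀) := by
        have := hcont.tendsto 0
        simpa using this
      have E1 : ∀ᶠ t in 𝓝[>] (0:ℝ), x₀ + t • d ∈ W :=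
        nhdsWithin_le_nhds (htend.eventually_mem hW)
      have E2 : ∀ᶠ t in 𝓝[>] (0:ℝ), ∀ k, xs k (x₀ + t • d) ≤ c k := by
        rw [eventually_all]
        intro k
        by_cases hk : xs k x₀ = c k
        · filter_upwards [self_mem_nhdsWithin] with t ht
          have ht' : (0:ℝ) < t := ht
          have hxx : xs k (x₀ + t • d) = xs k x₀ + t * xs k d := by
            simp [map_add, map_smul, smul_eq_mul]
          rw [hxx, hk]
          nlinarith [hxsd k hk]
        · have hlt : xs k x₀ < c k := lt_of_le_of_ne (hCx₀.2 k) hk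
          have htd : Tendsto (fun t : ℝ => xs k (x₀ + t • d)) (𝓝 0) (𝓝 (xs k x₀)) := by
            have h0 : Continuous fun t : ℝ => xs k (x₀ + t • d) := (xs k).continuous.comp hcont
            have := h0.tendsto 0
            simpa using this
          exact nhdsWithin_le_nhds ((htd.eventually_lt_const hlt).mono fun t h => h.le)
      have E3 : ∀ᶠ t in 𝓝[>] (0:ℝ), Gr (x₀ + t • d) ≤ Gr x₀ + t * M d := by
        have Ei : ∀ i : ι, ∀ᶠ t in 𝓝[>] (0:ℝ), u i (x₀ + t • d) + a i ≤ Gr x₀ + t * M d := by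
          intro i
          by_cases hi : u i x₀ + a i = Gr x₀
          · filter_upwards [self_mem_nhdsWithin] with t ht
            have ht' : (0:ℝ) < t := ht
            have h1 : u i d ≤ M d := Finset.le_sup' (fun i => u i d) (by simp [hIgF, hi])
            have h2 : u i (x₀ + t • d) = u i x₀ + t * u i d := by
              simp [map_add, map_smul, smul_eq_mul]
            nlinarith
          · have hlt : u i x₀ + a i < Gr x₀ := lt_of_le_of_ne (hterm_le i x₀) hi
            have htd : Tendsto (fun t : ℝ => (u i (x₀ + t • d) + a i) - (Gr x₀ + t * M d)) (𝓝 0)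
                (𝓝 ((u i x₀ + a i) - Gr x₀)) := by
              have h1 : Continuous fun t : ℝ => (u i (x₀ + t • d) + a i) - (Gr x₀ + t * M d) :=
                ((((u i).continuous.comp hcont)).add continuous_const).sub
                  (continuous_const.add (continuous_id.mul continuous_const))
              have := h1.tendsto 0
              simpa using this
            have hev := htd.eventually_lt_const (by linarith : (u i x₀ + a i) - Gr x₀ < 0)
            exact nhdsWithin_le_nhds (hev.mono fun t h => by linarith)
        rw [← eventually_all] at Ei
        filter_upwards [Ei] with t ht
        exact Finset.sup'_le _ _ fun i _ => ht i
      obtain ⟨t, htW, htC2, htG, htpos⟩ :=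
        (E1.and (E2.and (E3.and self_mem_nhdsWithin))).exists
      have ht0 : (0:ℝ) < t := htpos
      set x := x₀ + t • d with hxdef
      have hxC : x ∈ C := by
        rw [hCdef]
        refine ⟨?_, htC2⟩
        simp [hxdef, map_add, map_smul, hAd, hCx₀.1]
      have hxg : x ∈ domFn g := interior_subset htW.1.1
      have hxh : x ∈ domFn h := interior_subset htW.1.2
      have hle := hmin x ⟨hxC, htW.2⟩
      rw [hdc x₀ hx₀dg hx₀dh, hdc x hxg hxh, EReal.coe_le_coe_iff] at hle
      have hHlow : Hr x₀ + t * v j d ≤ Hr x := by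
        have h1 := htermh_le j x
        have h2 : v j x = v j x₀ + t * v j d := by
          simp [hxdef, map_add, map_smul, smul_eq_mul]
        rw [h2] at h1
        linarith [hj]
      nlinarith [htG, hHlow, hle, ht0]
    -- convexity of the RHS
    have hS2conv : Convex ℝ {w : X →L[ℝ] ℝ | ∃ lam : Fin p → ℝ, (∀ k, 0 ≤ lam k) ∧
        w = ∑ k ∈ Finset.univ.filter (fun k => xs k x₀ = c k), lam k • xs k} := by
      rintro w1 ⟨l1, hl1, rfl⟩ w2 ⟨l2, hl2, rfl⟩ s t hs ht hst
      refine ⟨fun k => s * l1 k + t * l2 k, fun k => add_nonneg (mul_nonneg hs (hl1 k)) (mul_nonneg ht (hl2 k)), ?_⟩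
      rw [Finset.smul_sum, Finset.smul_sum, ← Finset.sum_add_distrib]
      exact Finset.sum_congr rfl fun k _ => by rw [add_smul, smul_smul, smul_smul]
    have hS3conv : Convex ℝ {w : X →L[ℝ] ℝ | ∀ z : X, A z = 0 → w z = 0} := by
      rintro w1 h1 w2 h2 s t _ _ _ z hz
      simp [ContinuousLinearMap.add_apply, ContinuousLinearMap.smul_apply, h1 z hz, h2 z hz]
    refine convexHull_min ?_ (((convex_convexHull ℝ _).add hS2conv).add hS3conv)
    rintro φ ⟨j, hj, rfl⟩
    -- Farkas setup on (ker A) × ℝ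
    set V : Submodule ℝ X := LinearMap.ker (A : X →ₗ[ℝ] Y) with hVdef
    set e1 : (V × ℝ) →ₗ[ℝ] X := (Submodule.subtype V).comp (LinearMap.fst ℝ V ℝ) with he1
    set e2 : (V × ℝ) →ₗ[ℝ] ℝ := LinearMap.snd ℝ V ℝ with he2
    set F : ({i : ι // i ∈ IgF} ⊕ {k : Fin p // xs k x₀ = c k}) → (V × ℝ) →ₗ[ℝ] ℝ :=
      Sum.elim (fun i => ((u i.1 : X →ₗ[ℝ] ℝ).comp e1) - e2)
               (fun k => (xs k.1 : X →ₗ[ℝ] ℝ).comp e1) with hF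
    set T : (V × ℝ) →ₗ[ℝ] ℝ := ((v j : X →ₗ[ℝ] ℝ).comp e1) - e2 with hT
    have hfark : ∀ z : V × ℝ, (∀ s, F s z ≤ 0) → T z ≤ 0 := by
      rintro ⟨d, t⟩ hz
      have hAd : A (d : X) = 0 := LinearMap.mem_ker.mp d.2
      have hxsd : ∀ k, xs k x₀ = c k → xs k (d : X) ≤ 0 := fun k hk => by
        simpa [hF, he1] using hz (Sum.inr ⟨k, hk⟩)
      have hud : ∀ i ∈ IgF, u i (d : X) ≤ t := fun i hi => by
        have := hz (Sum.inl ⟨i, hi⟩)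
        simp [hF, he1, he2] at this
        linarith
      have hkey := key (d : X) hAd hxsd j hj
      have hMle : M (d : X) ≤ t := Finset.sup'_le _ _ fun i hi => hud i hi
      simp [hT, he1, he2]
      linarith
    obtain ⟨lam, hlam0, heq⟩ := farkas F T hfark
    -- evaluate at (0, 1) : sum of inl-coefficients is 1
    have h1 := congrArg (fun φ => φ ((0 : V), (1:ℝ))) heq
    simp [hT, hF, he1, he2, Fintype.sum_sum_type, LinearMap.sum_apply] at h1
    -- define the three pieces
    set θ : {i : ι // i ∈ IgF} → ℝ := fun i => lam (Sum.inl i) with hθ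
    have hsum1 : ∑ i : {i : ι // i ∈ IgF}, θ i = 1 := by
      have huniv : ∑ i : {i : ι // i ∈ IgF}, θ i = IgF.attach.sum θ :=
        Finset.sum_congr (by ext x; simp) (fun _ _ => rfl)
      rw [huniv, hθ]; linarith [h1]
    set q : X →L[ℝ] ℝ := ∑ i : {i : ι // i ∈ IgF}, θ i • u i.1 with hq
    set r : X →L[ℝ] ℝ := ∑ k : {k : Fin p // xs k x₀ = c k}, lam (Sum.inr k) • xs k.1 with hr
    have hqmem : q ∈ convexHull ℝ (u '' {i | u i x₀ + a i = Gr x₀}) := by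
      have hcm := Finset.centerMass_mem_convexHull (Finset.univ : Finset {i // i ∈ IgF})
        (w := θ) (fun i _ => hlam0 (Sum.inl i)) (by rw [hsum1]; norm_num)
        (z := fun i => u i.1)
        (fun i _ => Set.mem_image_of_mem u (show (i:ι) ∈ {i : ι | u i x₀ + a i = Gr x₀} from (Finset.mem_filter.mp i.2).2))
      have hcq : Finset.centerMass (Finset.univ : Finset {i // i ∈ IgF}) θ (fun i => u i.1)
          = q := by
        rw [Finset.centerMass, hsum1, inv_one, one_smul, hq]
      rw [← hcq]
      exact hcm
    have hrmem : r ∈ {w : X →L[ℝ] ℝ | ∃ lam : Fin p → ℝ, (∀ k, 0 ≤ lam k) ∧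
        w = ∑ k ∈ Finset.univ.filter (fun k => xs k x₀ = c k), lam k • xs k} := by
      refine ⟨fun k => if hk : xs k x₀ = c k then lam (Sum.inr ⟨k, hk⟩) else 0, fun k => ?_, ?_⟩
      · by_cases hk : xs k x₀ = c k
        · simp only [dif_pos hk]; exact hlam0 _
        · simp only [dif_neg hk]; exact le_rfl
      · have hss := Finset.sum_subtype (p := fun k : Fin p => xs k x₀ = c k)
          (F := inferInstance)
          (Finset.univ.filter (fun k => xs k x₀ = c k)) (fun k => by simp)
          (fun k => (if hk : xs k x₀ = c k then lam (Sum.inr ⟨k, hk⟩) else 0) • xs k)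
        rw [hss, hr]
        refine Finset.sum_congr rfl fun k _ => ?_
        simp only [dif_pos k.2]
    set wp : X →L[ℝ] ℝ := v j - q - r with hwp
    have hwmem : wp ∈ {w : X →L[ℝ] ℝ | ∀ z : X, A z = 0 → w z = 0} := by
      intro z hz
      have h2 := congrArg (fun φ => φ ((⟨z, hz⟩ : V), (0:ℝ))) heq
      simp [hT, hF, he1, he2, Fintype.sum_sum_type, LinearMap.sum_apply] at h2
      simp [hwp, hq, hr, ContinuousLinearMap.sub_apply, ContinuousLinearMap.sum_apply,
        ContinuousLinearMap.smul_apply, smul_eq_mul, hθ]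
      linarith [h2]
    have hvj : v j = q + r + wp := by rw [hwp]; abel
    rw [hvj]
    exact Set.add_mem_add (Set.add_mem_add hqmem hrmem) hwmem
  · -- backward direction
    intro hsub
    refine ⟨hx₀C, ?_⟩
    obtain ⟨i₀, hi₀F⟩ := hIgFne
    have hi₀ : u i₀ x₀ + a i₀ = Gr x₀ := by simpa [hIgF] using hi₀F
    set T : κ → Set X := fun j => if v j x₀ + b j = Hr x₀ then Set.univ
      else {x | v j (x - x₀) - u i₀ (x - x₀) < Hr x₀ - (v j x₀ + b j)} with hTdef
    refine ⟨interior (domFn g) ∩ interior (domFn h) ∩ ⋂ j, T j, ?_, ?_⟩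
    · refine Filter.inter_mem (Filter.inter_mem (isOpen_interior.mem_nhds hx₀g)
        (isOpen_interior.mem_nhds hx₀h)) ?_
      refine (isOpen_iInter_of_finite fun j => ?_).mem_nhds ?_
      · simp only [hTdef]
        by_cases hj : v j x₀ + b j = Hr x₀
        · rw [if_pos hj]; exact isOpen_univ
        · rw [if_neg hj]
          exact isOpen_lt (((v j).continuous.comp (continuous_id.sub continuous_const)).sub
            ((u i₀).continuous.comp (continuous_id.sub continuous_const))) continuous_const
      · refine Set.mem_iInter.2 fun j => ?_
        simp only [hTdef]
        by_cases hj : v j x₀ + b j = Hr x₀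
        · rw [if_pos hj]; trivial
        · rw [if_neg hj]
          have hlt : v j x₀ + b j < Hr x₀ := lt_of_le_of_ne (htermh_le j x₀) hj
          simp only [Set.mem_setOf_eq, sub_self, map_zero]
          linarith
    · rintro x ⟨hxC, ⟨hxg', hxh'⟩, hxT⟩
      have hxg : x ∈ domFn g := interior_subset hxg'
      have hxh : x ∈ domFn h := interior_subset hxh'
      rw [hdc x₀ hx₀dg hx₀dh, hdc x hxg hxh, EReal.coe_le_coe_iff]
      have hkey : ∀ j, v j x + b j ≤ Hr x₀ + (Gr x - Gr x₀) := by
        intro j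
        by_cases hj : v j x₀ + b j = Hr x₀
        · -- active index: use the inclusion
          have hmem := hsub (subset_convexHull ℝ _ (Set.mem_image_of_mem v hj))
          rw [Set.mem_add] at hmem
          obtain ⟨s12, hs12, s3, hs3, hsum⟩ := hmem
          rw [Set.mem_add] at hs12
          obtain ⟨s1, hs1, s2, hs2, hsum12⟩ := hs12
          obtain ⟨lamf, hlamf0, rfl⟩ := hs2
          have hAx : A (x - x₀) = 0 := by
            have hxy : A x = y := (by rwa [hCdef] at hxC : A x = y ∧ _).1
            rw [map_sub, hxy, hCx₀.1, sub_self]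
          have h3 : s3 (x - x₀) = 0 := hs3 _ hAx
          have h2 : (∑ k ∈ Finset.univ.filter (fun k => xs k x₀ = c k), lamf k • xs k)
              (x - x₀) ≤ 0 := by
            rw [ContinuousLinearMap.sum_apply]
            refine Finset.sum_nonpos fun k hk => ?_
            rw [Finset.mem_filter] at hk
            have hxk : xs k x ≤ c k := ((by rwa [hCdef] at hxC : A x = y ∧ ∀ k, xs k x ≤ c k)).2 k
            simp only [ContinuousLinearMap.smul_apply, smul_eq_mul, map_sub]
            have : xs k x - xs k x₀ ≤ 0 := by rw [hk.2]; linarith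
            nlinarith [mul_nonpos_of_nonneg_of_nonpos (hlamf0 k) this]
          have h1' : s1 (x - x₀) ≤ Gr x - Gr x₀ := by
            set L : (X →L[ℝ] ℝ) →ₗ[ℝ] ℝ :=
              { toFun := fun φ => φ (x - x₀),
                map_add' := fun φ ψ => rfl,
                map_smul' := fun cc φ => rfl } with hL
            have himg : L s1 ∈ convexHull ℝ (L '' (u '' {i | u i x₀ + a i = Gr x₀})) := by
              rw [← LinearMap.image_convexHull]
              exact Set.mem_image_of_mem L hs1
            have hIic : convexHull ℝ (L '' (u '' {i | u i x₀ + a i = Gr x₀})) ⊆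
                Set.Iic (Gr x - Gr x₀) := by
              refine convexHull_min ?_ (convex_Iic _)
              rintro φ₂ ⟨φ₁, ⟨i, hi, rfl⟩, rfl⟩
              have hle := hterm_le i x
              simp only [hL, LinearMap.coe_mk, AddHom.coe_mk, map_sub, Set.mem_Iic]
              have : u i x₀ + a i = Gr x₀ := hi
              linarith
            exact hIic himg
          have hvsum : v j (x - x₀) = s1 (x - x₀) +
              (∑ k ∈ Finset.univ.filter (fun k => xs k x₀ = c k), lamf k • xs k) (x - x₀) +
              s3 (x - x₀) := by
            rw [← hsum12] at hsum
            rw [← hsum]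
            simp [ContinuousLinearMap.add_apply]
          have hvineq : v j (x - x₀) ≤ Gr x - Gr x₀ := by
            rw [hvsum, h3]
            linarith
          have hvx : v j x = v j x₀ + v j (x - x₀) := by rw [map_sub]; ring
          linarith [hj, hvineq]
        · -- inactive index
          have hxTj := Set.mem_iInter.1 hxT j
          simp only [hTdef] at hxTj
          rw [if_neg hj] at hxTj
          rw [Set.mem_setOf_eq] at hxTj
          have h2 : u i₀ (x - x₀) ≤ Gr x - Gr x₀ := by
            have hle := hterm_le i₀ x
            rw [map_sub]
            linarith [hi₀]
          have h3 : v j x = v j x₀ + v j (x - x₀) := by rw [map_sub]; ring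
          linarith [hxTj]
      have hHx : Hr x ≤ Hr x₀ + (Gr x - Gr x₀) := Finset.sup'_le _ _ fun j _ => hkey j
      linarith
end

section
/- Let g: X → ℝ ∪ {+∞} be a lower semicontinuous, proper, convex function, h: X → ℝ ∪ {+∞} a proper generalized polyhedral convex function with representation h(x) = max_{j∈J}(⟨v_j*, x⟩ + β_j) for x ∈ dom h, and C ⊆ X a nonempty closed convex set with C ⊆ dom g and C ⊆ int(dom h). Then a point x ∈ C is a local solution of the problem: minimize g(x) − h(x) subject to x ∈ C, if and only if there exists a nonempty subset J₁ ⊆ J such that J(x) ⊆ J₁ and v_j* ∈ ∂(g + δ_C)(x) for every j ∈ J₁. -/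
open Pointwise Topology

/-- a point `x₀ ∈ C` is a local solution iff there is a nonempty `J₁ ⊆ J`
containing the active index set `J(x₀)` with `v j ∈ ∂(g + δ_C)(x₀)` for all `j ∈ J₁`. -/
theorem stmt4 {X : Type*} [AddCommGroup X] [Module ℝ X] [TopologicalSpace X]
    [IsTopologicalAddGroup X] [ContinuousSMul ℝ X] [LocallyConvexSpace ℝ X] [T2Space X]
    (κ : Type*) [Fintype κ] [Nonempty κ]
    (v : κ → (X →L[ℝ] ℝ)) (b : κ → ℝ)
    (g h : X → EReal)
    (hg1 : LowerSemicontinuous g) (hg2 : ProperFn g) (hg3 : ConvexFn g)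
    (hh2 : ProperFn h) (hh3 : IsGPCF X h)
    (hhrep : ∀ x ∈ domFn h,
      h x = ((Finset.univ.sup' Finset.univ_nonempty fun j => v j x + b j : ℝ) : EReal))
    (C : Set X) (hC1 : C.Nonempty) (hC2 : IsClosed C) (hC3 : Convex ℝ C)
    (hCg : C ⊆ domFn g) (hCh : C ⊆ interior (domFn h))
    (x₀ : X) (hx₀ : x₀ ∈ C) :
    IsLocalSolution g h C x₀ ↔
      ∃ J₁ : Set κ, J₁.Nonempty ∧
        {j : κ | ((v j x₀ + b j : ℝ) : EReal) = h x₀} ⊆ J₁ ∧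
        ∀ j ∈ J₁, v j ∈ SubdiffAt (fun x => g x + indFn C x) x₀ := by
  classical
  set H : X → ℝ := fun x => Finset.univ.sup' Finset.univ_nonempty fun j => v j x + b j with hHdef
  have hdomh : ∀ x ∈ C, x ∈ domFn h := fun x hx => interior_subset (hCh hx)
  have hrep : ∀ x ∈ C, h x = (H x : EReal) := fun x hx => hhrep x (hdomh x hx)
  have hgC : ∀ x ∈ C, g x = ((g x).toReal : EReal) := fun x hx =>
    (EReal.coe_toReal (hCg hx) (hg2.2 x)).symm
  have hdc : ∀ x ∈ C, dcObj g h x = (((g x).toReal - H x : ℝ) : EReal) := by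
    intro x hx
    have hhx := hrep x hx
    have hne : ¬ (g x = ⊤ ∧ h x = ⊤) := by
      rintro ⟨-, h2⟩; rw [hhx] at h2; exact (EReal.coe_ne_top _) h2
    rw [dcObj, if_neg hne, hhx]
    conv_lhs => rw [hgC x hx]
    rw [← EReal.coe_sub]
  set A : Finset κ := Finset.univ.filter (fun j => v j x₀ + b j = H x₀) with hAdef
  have hHx₀ : h x₀ = (H x₀ : EReal) := hrep x₀ hx₀
  have hmemA : ∀ j, j ∈ A ↔ v j x₀ + b j = H x₀ := by
    intro j; simp [hAdef]
  have hactive : {j : κ | ((v j x₀ + b j : ℝ) : EReal) = h x₀} = (↑A : Set κ) := by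
    ext j
    simp only [Set.mem_setOf_eq, hHx₀, EReal.coe_eq_coe_iff, Finset.mem_coe, hmemA]
  have hAne : A.Nonempty := by
    obtain ⟨k, -, hk⟩ := Finset.exists_mem_eq_sup' (Finset.univ_nonempty (α := κ))
      (fun j => v j x₀ + b j)
    exact ⟨k, (hmemA k).mpr hk.symm⟩
  -- characterization of subdifferential membership on C
  have hsub_iff : ∀ j : κ, v j ∈ SubdiffAt (fun x => g x + indFn C x) x₀ ↔
      ∀ x ∈ C, v j x - v j x₀ ≤ (g x).toReal - (g x₀).toReal := by
    intro j
    have hind₀ : indFn C x₀ = 0 := by simp [indFn, hx₀]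
    constructor
    · intro hp x hx
      have := hp x
      simp only at this
      rw [hind₀, add_zero] at this
      have hindx : indFn C x = 0 := by simp [indFn, hx]
      rw [hindx, add_zero, hgC x hx, hgC x₀ hx₀, ← EReal.coe_sub] at this
      exact EReal.coe_le_coe_iff.mp this
    · intro hp x
      simp only
      rw [hind₀, add_zero]
      by_cases hx : x ∈ C
      · have hindx : indFn C x = 0 := by simp [indFn, hx]
        rw [hindx, add_zero, hgC x hx, hgC x₀ hx₀, ← EReal.coe_sub]
        exact EReal.coe_le_coe_iff.mpr (hp x hx)
      · have hindx : indFn C x = ⊤ := by simp [indFn, hx]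
        rw [hindx, EReal.add_top_of_ne_bot (hg2.2 x), hgC x₀ hx₀, EReal.top_sub_coe]
        exact le_top
  -- convexity inequality
  have key : ∀ x ∈ C, ∀ t : ℝ, 0 ≤ t → t ≤ 1 →
      g (x₀ + t • (x - x₀)) ≤ (((1 - t) * (g x₀).toReal + t * (g x).toReal : ℝ) : EReal) := by
    intro x hx t ht0 ht1
    have hm₀ : ((x₀, (g x₀).toReal) : X × ℝ) ∈ epigraph g := by
      show g x₀ ≤ ((g x₀).toReal : EReal)
      exact le_of_eq (hgC x₀ hx₀)
    have hm : ((x, (g x).toReal) : X × ℝ) ∈ epigraph g := by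
      show g x ≤ ((g x).toReal : EReal)
      exact le_of_eq (hgC x hx)
    have hcomb := hg3 hm₀ hm (by linarith : (0:ℝ) ≤ 1 - t) ht0 (by ring)
    have heq1 : ((1 - t) • ((x₀, (g x₀).toReal) : X × ℝ) + t • ((x, (g x).toReal) : X × ℝ)).1
        = x₀ + t • (x - x₀) := by
      show (1 - t) • x₀ + t • x = x₀ + t • (x - x₀)
      module
    have heq2 : ((1 - t) • ((x₀, (g x₀).toReal) : X × ℝ) + t • ((x, (g x).toReal) : X × ℝ)).2
        = (1 - t) * (g x₀).toReal + t * (g x).toReal := rfl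
    have := hcomb
    rw [epigraph, Set.mem_setOf_eq, heq1, heq2] at this
    exact this
  constructor
  · rintro ⟨-, U, hU, hUmin⟩
    refine ⟨(↑A : Set κ), ⟨hAne.choose, hAne.choose_spec⟩, le_of_eq hactive, ?_⟩
    intro j hj
    rw [hsub_iff]
    intro x hx
    have hjact : v j x₀ + b j = H x₀ := (hmemA j).mp hj
    have hcont : Continuous fun t : ℝ => x₀ + t • (x - x₀) :=
      continuous_const.add (continuous_id.smul continuous_const)
    have hpre : (fun t : ℝ => x₀ + t • (x - x₀)) ⁻¹' U ∈ nhds (0 : ℝ) := by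
      have h0 : x₀ + (0:ℝ) • (x - x₀) = x₀ := by simp
      have := hcont.continuousAt (x := (0:ℝ))
      apply this.preimage_mem_nhds
      rw [h0]; exact hU
    obtain ⟨ε, hε, hball⟩ := Metric.mem_nhds_iff.mp hpre
    set t : ℝ := min (ε / 2) 1 with htdef
    have ht0 : 0 < t := lt_min (by linarith) one_pos
    have ht1 : t ≤ 1 := min_le_right _ _
    have htε : t < ε := lt_of_le_of_lt (min_le_left _ _) (by linarith)
    set y : X := x₀ + t • (x - x₀) with hydef
    have hyU : y ∈ U := by
      apply hball
      simp only [Metric.mem_ball, Real.dist_eq, sub_zero]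
      rw [abs_of_pos ht0]; exact htε
    have hyC : y ∈ C := by
      have hmem := hC3 hx₀ hx (by linarith : (0:ℝ) ≤ 1 - t) ht0.le (by ring)
      have : (1 - t) • x₀ + t • x = y := by rw [hydef]; module
      rwa [this] at hmem
    have hmin := hUmin y ⟨hyC, hyU⟩
    rw [hdc x₀ hx₀, hdc y hyC, EReal.coe_le_coe_iff] at hmin
    have hHy : v j y + b j ≤ H y := Finset.le_sup' (fun i => v i y + b i) (Finset.mem_univ j)
    have hconv := key x hx t ht0.le ht1
    have hgy : (g y).toReal ≤ (1 - t) * (g x₀).toReal + t * (g x).toReal := by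
      rw [hgC y hyC, EReal.coe_le_coe_iff] at hconv
      exact hconv
    have hvy : v j y = v j x₀ + t * (v j x - v j x₀) := by
      rw [hydef]
      simp only [map_add, map_smul, map_sub, smul_eq_mul]
    have hmul : t * (v j x - v j x₀) ≤ t * ((g x).toReal - (g x₀).toReal) := by
      nlinarith [hmin, hHy, hgy, hvy, hjact]
    exact le_of_mul_le_mul_left (by linarith) ht0
  · rintro ⟨J₁, hJ₁ne, hJ₁act, hJ₁sub⟩
    have hAJ₁ : (↑A : Set κ) ⊆ J₁ := by rw [← hactive]; exact hJ₁act
    refine ⟨hx₀, ?_⟩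
    set U : Set X :=
      ⋂ j ∈ Finset.univ.filter (fun j : κ => ¬ (v j x₀ + b j = H x₀)),
        {x : X | ∃ k ∈ A, v j x + b j < v k x + b k} with hUdef
    have hUopen : IsOpen U := by
      apply isOpen_biInter_finset
      intro j _
      have heq : {x : X | ∃ k ∈ A, v j x + b j < v k x + b k}
          = ⋃ k ∈ A, {x : X | v j x + b j < v k x + b k} := by
        ext z; simp
      rw [heq]
      refine isOpen_biUnion fun k _ => isOpen_lt ?_ ?_
      · exact ((v j).continuous.add continuous_const)
      · exact ((v k).continuous.add continuous_const)
    have hx₀U : x₀ ∈ U := by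
      simp only [hUdef, Set.mem_iInter]
      intro j hj
      simp only [Finset.mem_filter, Finset.mem_univ, true_and] at hj
      obtain ⟨k, hkA⟩ := hAne
      have hk : v k x₀ + b k = H x₀ := (hmemA k).mp hkA
      refine ⟨k, hkA, ?_⟩
      have hjle : v j x₀ + b j ≤ H x₀ := Finset.le_sup' (fun i => v i x₀ + b i) (Finset.mem_univ j)
      rw [hk]
      exact lt_of_le_of_ne hjle hj
    refine ⟨U, hUopen.mem_nhds hx₀U, ?_⟩
    rintro x ⟨hxC, hxU⟩
    rw [hdc x₀ hx₀, hdc x hxC, EReal.coe_le_coe_iff]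
    obtain ⟨k, -, hk⟩ := Finset.exists_mem_eq_sup' (Finset.univ_nonempty (α := κ))
      (fun j => v j x + b j)
    have hkA : k ∈ A := by
      by_contra hkn
      have hkn' : ¬ (v k x₀ + b k = H x₀) := fun hc => hkn ((hmemA k).mpr hc)
      have hxU' : x ∈ {x : X | ∃ m ∈ A, v k x + b k < v m x + b m} := by
        have := Set.mem_iInter.mp (hUdef ▸ hxU) k
        exact Set.mem_iInter.mp this (by simp [hkn'])
      obtain ⟨m, hm, hlt⟩ := hxU'
      have hle : v m x + b m ≤ H x := Finset.le_sup' (fun i => v i x + b i) (Finset.mem_univ m)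
      have hHx : H x = v k x + b k := hk
      linarith
    have hsubk := (hsub_iff k).mp (hJ₁sub k ?_) x hxC
    · have hkact : v k x₀ + b k = H x₀ := (hmemA k).mp hkA
      have hHx : H x = v k x + b k := hk
      linarith
    · exact hAJ₁ hkA
end

section
/- Let g: X → ℝ ∪ {+∞} be a lower semicontinuous, proper, convex function, h: X → ℝ ∪ {+∞} a proper generalized polyhedral convex function, and C ⊆ X a nonempty closed convex set with C ⊆ dom g and C ⊆ int(dom h). Then the set S₁ of local solutions of the problem: minimize g(x) − h(x) subject to x ∈ C, is the union of finitely many convex subsets of C. -/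
open Pointwise Topology

lemma gpcf_repr {X : Type*} [AddCommGroup X] [Module ℝ X] [TopologicalSpace X]
    (h : X → EReal) (hh2 : ProperFn h) (hh3 : IsGPCF X h) :
    ∃ (p : ℕ) (K : Finset (Fin p)) (ℓ : Fin p → X → ℝ),
      K.Nonempty ∧ (∀ k, Continuous (ℓ k)) ∧
      (∀ k (t : ℝ) (x y : X), ℓ k (x + t • (y - x)) = ℓ k x + t * (ℓ k y - ℓ k x)) ∧
      (∀ x ∈ domFn h, ∀ t : ℝ, (h x ≤ (t : EReal) ↔ ∀ k ∈ K, ℓ k x ≤ t)) := by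
  classical
  obtain ⟨L, p, a, c, hLc, hepi⟩ := hh3
  obtain ⟨x₀, hx₀⟩ := hh2.1
  have hbot := hh2.2
  set b : Fin p → X →L[ℝ] ℝ := fun k => (a k).comp (ContinuousLinearMap.inl ℝ X ℝ) with hb
  set β : Fin p → ℝ := fun k => a k (0, 1) with hβ
  have hsplit : ∀ k (x : X) (t : ℝ), a k (x, t) = b k x + t * β k := by
    intro k x t
    have hxt : ((x, t) : X × ℝ) = (x, 0) + t • ((0 : X), (1 : ℝ)) := by
      simp [Prod.ext_iff]
    rw [hxt, map_add, map_smul]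
    simp [hb, hβ, smul_eq_mul, ContinuousLinearMap.inl_apply]
  have hmem : ∀ (x : X) (t : ℝ),
      h x ≤ (t : EReal) ↔ ((x, t) ∈ L ∧ ∀ k, b k x + t * β k ≤ c k) := by
    intro x t
    have h1 : ((x, t) ∈ epigraph h) ↔ ((x, t) ∈ {q : X × ℝ | q ∈ L ∧ ∀ k, a k q ≤ c k}) :=
      Set.ext_iff.mp hepi (x, t)
    simp only [epigraph, Set.mem_setOf_eq] at h1
    rw [h1]
    constructor
    · rintro ⟨h2, h3⟩; exact ⟨h2, fun k => by rw [← hsplit]; exact h3 k⟩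
    · rintro ⟨h2, h3⟩; exact ⟨h2, fun k => by rw [hsplit]; exact h3 k⟩
  have hx₀r : h x₀ = (((h x₀).toReal : ℝ) : EReal) := (EReal.coe_toReal hx₀ (hbot x₀)).symm
  set H₀ : ℝ := (h x₀).toReal with hH₀
  have hle : ∀ t : ℝ, H₀ ≤ t → h x₀ ≤ (t : EReal) := by
    intro t ht; rw [hx₀r]; exact_mod_cast ht
  -- direction (0,1)
  have hdir : (((0 : X), (1 : ℝ)) : X × ℝ) ∈ L.direction := by
    have h1 : ((x₀, H₀) : X × ℝ) ∈ L := ((hmem x₀ H₀).mp (hle H₀ le_rfl)).1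
    have h2 : ((x₀, H₀ + 1) : X × ℝ) ∈ L := ((hmem x₀ (H₀ + 1)).mp (hle _ (by linarith))).1
    have h3 := AffineSubspace.vsub_mem_direction h2 h1
    have h4 : ((x₀, H₀ + 1) : X × ℝ) -ᵥ (x₀, H₀) = ((0 : X), (1 : ℝ)) := by
      simp [Prod.ext_iff]
    rwa [h4] at h3
  have hL : ∀ x ∈ domFn h, ∀ t : ℝ, ((x, t) : X × ℝ) ∈ L := by
    intro x hx t
    have hxr : h x = (((h x).toReal : ℝ) : EReal) := (EReal.coe_toReal hx (hbot x)).symm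
    have h1 : ((x, (h x).toReal) : X × ℝ) ∈ L := ((hmem x _).mp (le_of_eq hxr)).1
    have h2 := AffineSubspace.vadd_mem_of_mem_direction
      (Submodule.smul_mem _ (t - (h x).toReal) hdir) h1
    have h3 : (t - (h x).toReal) • (((0 : X), (1 : ℝ)) : X × ℝ) +ᵥ ((x, (h x).toReal) : X × ℝ)
        = ((x, t) : X × ℝ) := by
      simp [Prod.ext_iff, vadd_eq_add]
    rwa [h3] at h2
  -- β k ≤ 0
  have hβle : ∀ k, β k ≤ 0 := by
    intro k
    by_contra hk
    push_neg at hk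
    set t : ℝ := max H₀ ((c k - b k x₀) / β k + 1) with ht
    have h1 : h x₀ ≤ (t : EReal) := hle t (le_max_left _ _)
    have h2 : b k x₀ + t * β k ≤ c k := ((hmem x₀ t).mp h1).2 k
    have h3 : (c k - b k x₀) / β k + 1 ≤ t := le_max_right _ _
    have h4 : ((c k - b k x₀) / β k + 1) * β k ≤ t * β k :=
      mul_le_mul_of_nonneg_right h3 hk.le
    rw [add_mul, div_mul_cancel₀ _ (ne_of_gt hk), one_mul] at h4
    linarith
  have hz : ∀ x ∈ domFn h, ∀ k, β k = 0 → b k x ≤ c k := by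
    intro x hx k hk
    have hxr : h x = (((h x).toReal : ℝ) : EReal) := (EReal.coe_toReal hx (hbot x)).symm
    have h1 := ((hmem x _).mp (le_of_eq hxr)).2 k
    rw [hk] at h1; linarith
  set K : Finset (Fin p) := Finset.univ.filter (fun k => β k < 0) with hKdef
  set ℓ : Fin p → X → ℝ := fun k x => (b k x - c k) / (-β k) with hℓ
  have hmain : ∀ x ∈ domFn h, ∀ t : ℝ, (h x ≤ (t : EReal) ↔ ∀ k ∈ K, ℓ k x ≤ t) := by
    intro x hx t
    rw [hmem x t]
    constructor
    · rintro ⟨-, h2⟩ k hk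
      have hkβ : β k < 0 := (Finset.mem_filter.mp hk).2
      have h3 := h2 k
      rw [hℓ, div_le_iff₀ (by linarith : (0:ℝ) < -β k)]
      linarith
    · intro h2
      refine ⟨hL x hx t, fun k => ?_⟩
      rcases lt_or_eq_of_le (hβle k) with hk | hk
      · have hk' : k ∈ K := Finset.mem_filter.mpr ⟨Finset.mem_univ k, hk⟩
        have h3 := h2 k hk'
        rw [hℓ, div_le_iff₀ (by linarith : (0:ℝ) < -β k)] at h3
        linarith
      · rw [hk]; simpa using hz x hx k hk
  have hKne : K.Nonempty := by
    by_contra hK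
    rw [Finset.not_nonempty_iff_eq_empty] at hK
    have h1 : h x₀ ≤ ((H₀ - 1 : ℝ) : EReal) := by
      rw [hmain x₀ hx₀ (H₀ - 1)]
      intro k hk; rw [hK] at hk; exact absurd hk (Finset.notMem_empty k)
    rw [hx₀r] at h1
    have := EReal.coe_le_coe_iff.mp h1
    linarith
  refine ⟨p, K, ℓ, hKne, ?_, ?_, hmain⟩
  · intro k
    exact ((b k).continuous.sub continuous_const).div_const _
  · intro k t x y
    simp only [hℓ, map_add, map_smul, map_sub, smul_eq_mul]
    ring


/-- the local solution set is the union of finitely many convex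
subsets of `C`. -/
theorem stmt6 {X : Type*} [AddCommGroup X] [Module ℝ X] [TopologicalSpace X]
    [IsTopologicalAddGroup X] [ContinuousSMul ℝ X] [LocallyConvexSpace ℝ X] [T2Space X]
    (g h : X → EReal)
    (hg1 : LowerSemicontinuous g) (hg2 : ProperFn g) (hg3 : ConvexFn g)
    (hh2 : ProperFn h) (hh3 : IsGPCF X h)
    (C : Set X) (hC1 : C.Nonempty) (hC2 : IsClosed C) (hC3 : Convex ℝ C)
    (hCg : C ⊆ domFn g) (hCh : C ⊆ interior (domFn h)) :
    ∃ (n : ℕ) (A : Fin n → Set X), (∀ i, Convex ℝ (A i) ∧ A i ⊆ C) ∧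
      {x : X | IsLocalSolution g h C x} = ⋃ i, A i := by
  classical
  obtain ⟨p, K, ℓ, hKne, hℓc, hℓa, hiff⟩ := gpcf_repr h hh2 hh3
  have hgbot := hg2.2
  have hhbot := hh2.2
  set G : X → ℝ := fun x => (g x).toReal with hGdef
  set H : X → ℝ := fun x => (h x).toReal with hHdef
  have hCdomh : C ⊆ domFn h := fun x hx => interior_subset (hCh hx)
  have hgx : ∀ x ∈ C, g x = ((G x : ℝ) : EReal) := fun x hx =>
    (EReal.coe_toReal (hCg hx) (hgbot x)).symm
  have hhx : ∀ x ∈ C, h x = ((H x : ℝ) : EReal) := fun x hx =>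
    (EReal.coe_toReal (hCdomh hx) (hhbot x)).symm
  -- each ℓ k is below H on C, and H is the max
  have hℓle : ∀ x ∈ C, ∀ k ∈ K, ℓ k x ≤ H x := by
    intro x hx k hk
    exact (hiff x (hCdomh hx) (H x)).mp (le_of_eq (hhx x hx)) k hk
  have hHsup : ∀ x ∈ C, ∀ j ∈ K, (∀ k ∈ K, ℓ k x ≤ ℓ j x) → H x = ℓ j x := by
    intro x hx j hj hmax
    have h1 : h x ≤ ((ℓ j x : ℝ) : EReal) := (hiff x (hCdomh hx) _).mpr hmax
    rw [hhx x hx] at h1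
    exact le_antisymm (EReal.coe_le_coe_iff.mp h1) (hℓle x hx j hj)
  -- existence of a maximizer
  have hmaxex : ∀ x : X, ∃ j ∈ K, ∀ k ∈ K, ℓ k x ≤ ℓ j x := by
    intro x
    obtain ⟨j, hj, hje⟩ := K.exists_mem_eq_sup' hKne (fun k => ℓ k x)
    exact ⟨j, hj, fun k hk => (Finset.le_sup' (fun k => ℓ k x) hk).trans_eq hje⟩
  -- dcObj formula on C
  have hdc : ∀ x ∈ C, dcObj g h x = ((G x - H x : ℝ) : EReal) := by
    intro x hx
    unfold dcObj
    rw [if_neg (fun hcon => (hCg hx) hcon.1), hgx x hx, hhx x hx]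
    exact (EReal.coe_sub _ _).symm
  -- convexity of G along segments in C
  have hGconv : ∀ (x y : X) (t : ℝ), x ∈ C → y ∈ C → 0 ≤ t → t ≤ 1 →
      G (x + t • (y - x)) ≤ G x + t * (G y - G x) := by
    intro x y t hx hy ht0 ht1
    have hcomb : (1 - t) • x + t • y = x + t • (y - x) := by module
    have hzC : x + t • (y - x) ∈ C := by
      rw [← hcomb]; exact hC3 hx hy (by linarith) ht0 (by ring)
    have hex : (x, G x) ∈ epigraph g := le_of_eq (hgx x hx)
    have hey : (y, G y) ∈ epigraph g := le_of_eq (hgx y hy)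
    have hmem := hg3 hex hey (by linarith : (0:ℝ) ≤ 1 - t) ht0 (by ring)
    have hps : (1 - t) • ((x, G x) : X × ℝ) + t • ((y, G y) : X × ℝ)
        = (x + t • (y - x), (1 - t) * G x + t * G y) := by
      rw [Prod.smul_mk, Prod.smul_mk, Prod.mk_add_mk, hcomb]
      simp [smul_eq_mul]
    rw [hps] at hmem
    have h1 : g (x + t • (y - x)) ≤ (((1 - t) * G x + t * G y : ℝ) : EReal) := hmem
    rw [hgx _ hzC] at h1
    have := EReal.coe_le_coe_iff.mp h1
    linarith
  -- local minimality of a convex function implies global minimality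
  have loc2glob : ∀ (j : Fin p) (x : X), x ∈ C → ∀ U ∈ nhds x,
      (∀ y ∈ C ∩ U, G x - ℓ j x ≤ G y - ℓ j y) → ∀ y ∈ C, G x - ℓ j x ≤ G y - ℓ j y := by
    intro j x hx U hU hloc y hy
    have hcont : Filter.Tendsto (fun t : ℝ => x + t • (y - x)) (nhds 0) (nhds x) := by
      have hc : Continuous fun t : ℝ => x + t • (y - x) :=
        continuous_const.add (continuous_id.smul continuous_const)
      have h0 : x + (0:ℝ) • (y - x) = x := by simp
      simpa [h0] using hc.tendsto 0
    have hev : ∀ᶠ t in nhds (0:ℝ), x + t • (y - x) ∈ U :=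
      hcont.eventually (show ∀ᶠ z in nhds x, z ∈ U from hU)
    obtain ⟨ε, hε, hball⟩ := Metric.eventually_nhds_iff.mp hev
    set t : ℝ := min (ε / 2) 1 with htdef
    have ht0 : 0 < t := lt_min (by linarith) one_pos
    have ht1 : t ≤ 1 := min_le_right _ _
    have htε : dist t 0 < ε := by
      rw [Real.dist_eq, sub_zero, abs_of_pos ht0]
      calc t ≤ ε / 2 := min_le_left _ _
        _ < ε := by linarith
    have hzU : x + t • (y - x) ∈ U := hball htε
    have hzC : x + t • (y - x) ∈ C := by
      have hcomb : (1 - t) • x + t • y = x + t • (y - x) := by module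
      rw [← hcomb]; exact hC3 hx hy (by linarith) ht0.le (by ring)
    have h1 := hloc _ ⟨hzC, hzU⟩
    have h2 := hGconv x y t hx hy ht0.le ht1
    have h3 := hℓa j t x y
    by_contra hcon
    push_neg at hcon
    have h4 : t * ((G y - ℓ j y) - (G x - ℓ j x)) < 0 :=
      mul_neg_of_pos_of_neg ht0 (by linarith)
    nlinarith
  -- the pieces
  set E : Finset (Fin p) → Set X := fun J =>
    if J ⊆ K ∧ J.Nonempty then
      {x | x ∈ C ∧ (∀ j ∈ J, ∀ j' ∈ J, ℓ j x = ℓ j' x) ∧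
        (∀ k ∈ K, k ∉ J → ∀ j ∈ J, ℓ k x < ℓ j x) ∧
        (∀ j ∈ J, ∀ y ∈ C, G x - ℓ j x ≤ G y - ℓ j y)}
    else ∅ with hEdef
  have hEsub : ∀ J, E J ⊆ C := by
    intro J
    simp only [hEdef]
    split
    · exact fun x hx => hx.1
    · exact Set.empty_subset C
  have hEconv : ∀ J, Convex ℝ (E J) := by
    intro J
    simp only [hEdef]
    split
    · rintro x ⟨hxC, hxeq, hxlt, hxsol⟩ y ⟨hyC, hyeq, hylt, hysol⟩ a b ha hb hab
      have hb1 : b ≤ 1 := by linarith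
      have hcomb : a • x + b • y = x + b • (y - x) := by
        have haa : a = 1 - b := by linarith
        rw [haa]; module
      rw [hcomb]
      refine ⟨?_, ?_, ?_, ?_⟩
      · rw [← hcomb]; exact hC3 hxC hyC ha hb hab
      · intro j hj j' hj'
        rw [hℓa j b x y, hℓa j' b x y, hxeq j hj j' hj', hyeq j hj j' hj']
      · intro k hk hkJ j hj
        rw [hℓa k b x y, hℓa j b x y]
        have h1 := hxlt k hk hkJ j hj
        have h2 := hylt k hk hkJ j hj
        rcases lt_or_ge b 1 with hblt | hbge
        · have h3 := mul_lt_mul_of_pos_left h1 (by linarith : (0:ℝ) < 1 - b)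
          have h4 := mul_le_mul_of_nonneg_left h2.le hb
          nlinarith
        · have hbeq : b = 1 := le_antisymm hb1 hbge
          rw [hbeq]; ring_nf; linarith
      · intro j hj w hw
        have h1 := hxsol j hj w hw
        have h2 := hysol j hj w hw
        have h3 := hGconv x y b hxC hyC hb hb1
        have h4 := hℓa j b x y
        have h5 := mul_le_mul_of_nonneg_left h1 (by linarith : (0:ℝ) ≤ 1 - b)
        have h6 := mul_le_mul_of_nonneg_left h2 hb
        nlinarith
    · exact convex_empty
  -- the set equality
  have hset : {x : X | IsLocalSolution g h C x} = ⋃ J : Finset (Fin p), E J := by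
    ext x
    simp only [Set.mem_setOf_eq, Set.mem_iUnion]
    constructor
    · rintro ⟨hxC, U, hU, hloc⟩
      obtain ⟨j₀, hj₀K, hj₀max⟩ := hmaxex x
      have hHx : H x = ℓ j₀ x := hHsup x hxC j₀ hj₀K hj₀max
      set J : Finset (Fin p) := K.filter (fun j => ℓ j x = H x) with hJdef
      have hJsub : J ⊆ K := Finset.filter_subset _ _
      have hJne : J.Nonempty := ⟨j₀, Finset.mem_filter.mpr ⟨hj₀K, hHx.symm⟩⟩
      refine ⟨J, ?_⟩
      simp only [hEdef]
      rw [if_pos ⟨hJsub, hJne⟩]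
      have hJval : ∀ j ∈ J, ℓ j x = H x := fun j hj => (Finset.mem_filter.mp hj).2
      refine ⟨hxC, ?_, ?_, ?_⟩
      · intro j hj j' hj'; rw [hJval j hj, hJval j' hj']
      · intro k hk hkJ j hj
        rw [hJval j hj]
        rcases lt_or_eq_of_le (hℓle x hxC k hk) with hlt | heq
        · exact hlt
        · exact absurd (Finset.mem_filter.mpr ⟨hk, heq⟩) hkJ
      · intro j hj
        refine loc2glob j x hxC U hU ?_
        intro y ⟨hyC, hyU⟩
        have h1 := hloc y ⟨hyC, hyU⟩
        rw [hdc x hxC, hdc y hyC] at h1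
        have h2 := EReal.coe_le_coe_iff.mp h1
        have h3 := hℓle y hyC j (hJsub hj)
        have h4 := hJval j hj
        linarith
    · rintro ⟨J, hxJ⟩
      simp only [hEdef] at hxJ
      by_cases hJ : J ⊆ K ∧ J.Nonempty
      swap
      · rw [if_neg hJ] at hxJ; exact absurd hxJ (Set.notMem_empty x)
      rw [if_pos hJ] at hxJ
      obtain ⟨hxC, hxeq, hxlt, hxsol⟩ := hxJ
      obtain ⟨hJsub, j₀, hj₀⟩ := hJ
      have hHx : H x = ℓ j₀ x := by
        refine hHsup x hxC j₀ (hJsub hj₀) ?_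
        intro k hk
        by_cases hkJ : k ∈ J
        · exact le_of_eq (hxeq k hkJ j₀ hj₀)
        · exact (hxlt k hk hkJ j₀ hj₀).le
      refine ⟨hxC, {y | ∀ k ∈ K, k ∉ J → ℓ k y < ℓ j₀ y}, ?_, ?_⟩
      · have hopen : IsOpen {y : X | ∀ k ∈ K, k ∉ J → ℓ k y < ℓ j₀ y} := by
          have heqS : {y : X | ∀ k ∈ K, k ∉ J → ℓ k y < ℓ j₀ y}
              = ⋂ k ∈ (K.filter (· ∉ J)), {y : X | ℓ k y < ℓ j₀ y} := by
            ext y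
            simp only [Set.mem_setOf_eq, Set.mem_iInter, Finset.mem_filter]
            constructor
            · rintro hy k ⟨hk1, hk2⟩; exact hy k hk1 hk2
            · intro hy k hk1 hk2; exact hy k ⟨hk1, hk2⟩
          rw [heqS]
          exact isOpen_biInter_finset fun k _ => isOpen_lt (hℓc k) (hℓc j₀)
        refine hopen.mem_nhds ?_
        intro k hk hkJ
        calc ℓ k x < ℓ j₀ x := hxlt k hk hkJ j₀ hj₀
          _ = ℓ j₀ x := rfl
      · intro y ⟨hyC, hyU⟩
        rw [hdc x hxC, hdc y hyC]
        rw [EReal.coe_le_coe_iff]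
        obtain ⟨j₁, hj₁K, hj₁max⟩ := hmaxex y
        have hHy : H y = ℓ j₁ y := hHsup y hyC j₁ hj₁K hj₁max
        have hj₁J : j₁ ∈ J := by
          by_contra hj₁J
          have h1 : ℓ j₁ y < ℓ j₀ y := hyU j₁ hj₁K hj₁J
          have h2 : ℓ j₀ y ≤ ℓ j₁ y := hj₁max j₀ (hJsub hj₀)
          linarith
        have h1 := hxsol j₁ hj₁J y hyC
        have h2 : ℓ j₁ x = ℓ j₀ x := hxeq j₁ hj₁J j₀ hj₀
        rw [hHx, hHy]
        linarith
  -- assemble with a Fin indexing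
  have hcard : Fintype.card (Finset (Fin p)) = 2 ^ p := by
    simp [Fintype.card_finset]
  set e : Fin (2 ^ p) ≃ Finset (Fin p) := (Fintype.equivFinOfCardEq hcard).symm with hedef
  refine ⟨2 ^ p, fun i => E (e i), fun i => ⟨hEconv (e i), hEsub (e i)⟩, ?_⟩
  rw [hset, e.surjective.iUnion_comp E]
end

section
/- Let g: X → ℝ ∪ {+∞} be a lower semicontinuous, proper, convex function, h: X → ℝ ∪ {+∞} a proper generalized polyhedral convex function, and C ⊆ X a nonempty closed convex set with C ⊆ dom g and C ⊆ int(dom h). Then the set S of global solutions of the problem: minimize g(x) − h(x) subject to x ∈ C, is the union of finitely many closed convex subsets of C. -/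
open Pointwise Topology

lemma ereal_real (e : EReal) (h1 : e ≠ ⊤) (h2 : e ≠ ⊥) : ∃ r : ℝ, e = r := by
  lift e to ℝ using ⟨h1, h2⟩; exact ⟨e, rfl⟩

lemma closed_sublevel {X : Type*} [TopologicalSpace X] {g : X → EReal}
    (hg : LowerSemicontinuous g) {c : X → ℝ} (hc : Continuous c) :
    IsClosed {x | g x ≤ (c x : EReal)} := by
  rw [← isOpen_compl_iff, isOpen_iff_mem_nhds]
  intro x hx
  simp only [Set.mem_compl_iff, Set.mem_setOf_eq, not_le] at hx
  obtain ⟨z, hz1, hz2⟩ := EReal.exists_between_coe_real hx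
  have h1 : ∀ᶠ y in nhds x, (z : EReal) < g y := hg x z hz2
  have h2 : ∀ᶠ y in nhds x, c y < z := by
    have : c x < z := by exact_mod_cast hz1
    exact (isOpen_Iio.preimage hc).mem_nhds this
  filter_upwards [h1, h2] with y hy1 hy2
  simp only [Set.mem_compl_iff, Set.mem_setOf_eq, not_le]
  exact lt_trans (by exact_mod_cast hy2) hy1

lemma dc_formula {X : Type*} (g h : X → EReal) (x : X) (gx hx : ℝ)
    (h1 : g x = (gx : EReal)) (h2 : h x = (hx : EReal)) :
    dcObj g h x = ((gx - hx : ℝ) : EReal) := by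
  simp [dcObj, h1, h2, EReal.coe_sub]

/-- the global solution set is the union of finitely many closed convex
subsets of `C`. -/
theorem stmt7 {X : Type*} [AddCommGroup X] [Module ℝ X] [TopologicalSpace X]
    [IsTopologicalAddGroup X] [ContinuousSMul ℝ X] [LocallyConvexSpace ℝ X] [T2Space X]
    (g h : X → EReal)
    (hg1 : LowerSemicontinuous g) (hg2 : ProperFn g) (hg3 : ConvexFn g)
    (hh2 : ProperFn h) (hh3 : IsGPCF X h)
    (C : Set X) (hC1 : C.Nonempty) (hC2 : IsClosed C) (hC3 : Convex ℝ C)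
    (hCg : C ⊆ domFn g) (hCh : C ⊆ interior (domFn h)) :
    ∃ (n : ℕ) (A : Fin n → Set X), (∀ i, IsClosed (A i) ∧ Convex ℝ (A i) ∧ A i ⊆ C) ∧
      {x : X | IsSolution g h C x} = ⋃ i, A i := by
  classical
  by_cases hS : ∃ x, IsSolution g h C x
  · obtain ⟨x₀, hx₀C, hx₀min⟩ := hS
    obtain ⟨L, p, a, c, hLcl, hepi⟩ := hh3
    have hhC : ∀ x ∈ C, ∃ r : ℝ, h x = (r : EReal) := fun x hx =>
      ereal_real _ (interior_subset (hCh hx)) (hh2.2 x)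
    have hgC : ∀ x ∈ C, ∃ r : ℝ, g x = (r : EReal) := fun x hx =>
      ereal_real _ (hCg hx) (hg2.2 x)
    obtain ⟨hr₀, hx₀h⟩ := hhC x₀ hx₀C
    obtain ⟨gr₀, hx₀g⟩ := hgC x₀ hx₀C
    set φ : Fin p → (X →L[ℝ] ℝ) := fun k => (a k).comp (ContinuousLinearMap.inl ℝ X ℝ) with hφ
    set β : Fin p → ℝ := fun k => a k ((0 : X), (1 : ℝ)) with hβ
    have hak : ∀ (k : Fin p) (x : X) (t : ℝ), a k (x, t) = φ k x + t * β k := by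
      intro k x t
      have hxt : (x, t) = (x, (0:ℝ)) + t • ((0:X), (1:ℝ)) := by
        simp [Prod.ext_iff]
      rw [hxt, map_add, map_smul]
      simp [hφ, hβ, smul_eq_mul]
    have hmem : ∀ (x : X) (t : ℝ),
        h x ≤ (t : EReal) ↔ ((x, t) ∈ L ∧ ∀ k, a k (x, t) ≤ c k) := by
      intro x t
      constructor
      · intro ht
        have : (x, t) ∈ epigraph h := ht
        rw [hepi] at this; exact this
      · intro ht
        have : (x, t) ∈ epigraph h := by rw [hepi]; exact ht
        exact this
    have h01 : ((0 : X), (1 : ℝ)) ∈ L.direction := by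
      have e1 := (hmem x₀ hr₀).mp (le_of_eq hx₀h)
      have e2 := (hmem x₀ (hr₀ + 1)).mp (by rw [hx₀h]; exact_mod_cast le_of_lt (lt_add_one hr₀))
      have hm := AffineSubspace.vsub_mem_direction e2.1 e1.1
      have : (x₀, hr₀ + 1) -ᵥ (x₀, hr₀) = ((0 : X), (1 : ℝ)) := by
        simp [Prod.ext_iff, vsub_eq_sub]
      rwa [this] at hm
    have hβle : ∀ k, β k ≤ 0 := by
      intro k
      by_contra hb
      push_neg at hb
      set t := max hr₀ ((c k - φ k x₀) / β k + 1) with ht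
      have hmem' := (hmem x₀ t).mp (by rw [hx₀h]; exact_mod_cast le_max_left _ _)
      have h1 := hmem'.2 k
      rw [hak] at h1
      have h2 : (c k - φ k x₀) / β k + 1 ≤ t := le_max_right _ _
      have h3 : ((c k - φ k x₀) / β k) * β k = c k - φ k x₀ := div_mul_cancel₀ _ (ne_of_gt hb)
      nlinarith [mul_le_mul_of_nonneg_right h2 hb.le]
    set l : Fin p → X → ℝ := fun k x => (c k - φ k x) / β k with hl
    have hchar : ∀ x ∈ C, ∀ r t : ℝ, h x = (r : EReal) →
        (h x ≤ (t : EReal) ↔ ∀ k, β k < 0 → l k x ≤ t) := by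
      intro x hx r t hxr
      constructor
      · intro ht k hk
        have h1 := ((hmem x t).mp ht).2 k
        rw [hak] at h1
        rw [hl]
        simp only []
        rw [div_le_iff_of_neg hk]
        linarith
      · intro hall
        rw [hmem]
        have hr := (hmem x r).mp (le_of_eq hxr)
        constructor
        · have heq : (x, t) = (t - r) • ((0:X), (1:ℝ)) +ᵥ (x, r) := by
            simp [Prod.ext_iff, vadd_eq_add, smul_eq_mul]
          rw [heq]
          exact AffineSubspace.vadd_mem_of_mem_direction (L.direction.smul_mem _ h01) hr.1
        · intro k
          rcases lt_or_eq_of_le (hβle k) with hk | hk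
          · rw [hak]
            have h1 := hall k hk
            rw [hl] at h1
            simp only [] at h1
            rw [div_le_iff_of_neg hk] at h1
            linarith
          · have h1 := hr.2 k
            rw [hak] at h1 ⊢
            rw [hk] at h1 ⊢
            linarith
    have hKne : ∃ k, β k < 0 := by
      by_contra hk
      push_neg at hk
      have h1 := (hchar x₀ hx₀C hr₀ (hr₀ - 1) hx₀h).mpr
        (fun k hk' => absurd hk' (not_lt.mpr (hk k)))
      rw [hx₀h] at h1
      have := EReal.coe_le_coe_iff.mp h1
      linarith
    set K : Finset (Fin p) := Finset.univ.filter (fun k => β k < 0) with hK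
    have hKne' : K.Nonempty := ⟨hKne.choose, Finset.mem_filter.mpr ⟨Finset.mem_univ _, hKne.choose_spec⟩⟩
    have hmax : ∀ x ∈ C, ∀ r : ℝ, h x = (r : EReal) → ∃ k, β k < 0 ∧ l k x = r := by
      intro x hx r hxr
      set t := K.sup' hKne' (fun k => l k x) with htdef
      have h1 : h x ≤ (t : EReal) := (hchar x hx r t hxr).mpr
        (fun k hk => Finset.le_sup' (fun j => l j x) (show k ∈ K from Finset.mem_filter.mpr ⟨Finset.mem_univ k, hk⟩))
      have h2 : ∀ k, β k < 0 → l k x ≤ r :=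
        (hchar x hx r r hxr).mp (le_of_eq hxr)
      have h3 : r ≤ t := by rw [hxr] at h1; exact_mod_cast h1
      have h4 : t ≤ r := Finset.sup'_le _ _ (fun k hk => h2 k (by simpa [hK] using hk))
      obtain ⟨k, hkK, hkeq⟩ := Finset.exists_mem_eq_sup' hKne' (fun k => l k x)
      have hkb : β k < 0 := (Finset.mem_filter.mp hkK).2
      refine ⟨k, hkb, le_antisymm (h2 k hkb) ?_⟩
      rw [htdef, hkeq] at h3
      exact h3
    have hepicl : IsClosed (epigraph h) := by
      rw [hepi]
      have : {y : X × ℝ | y ∈ L ∧ ∀ k, a k y ≤ c k}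
          = (L : Set (X × ℝ)) ∩ ⋂ k, {y | a k y ≤ c k} := by
        ext y; simp
      rw [this]
      exact hLcl.inter (isClosed_iInter fun k =>
        isClosed_le (a k).continuous continuous_const)
    have hepiconv : Convex ℝ (epigraph h) := by
      rw [hepi]
      intro u hu v hv s t hs ht hst
      refine ⟨L.convex hu.1 hv.1 hs ht hst, fun k => ?_⟩
      have : a k (s • u + t • v) = s * a k u + t * a k v := by
        rw [map_add, map_smul, map_smul]; simp [smul_eq_mul]
      rw [this]
      calc s * a k u + t * a k v ≤ s * c k + t * c k := by
            apply add_le_add <;> apply mul_le_mul_of_nonneg_left <;>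
              first | exact hu.2 k | exact hv.2 k | exact hs | exact ht
        _ = c k := by rw [← add_mul, hst, one_mul]
    have hlcont : ∀ k, Continuous (fun x => l k x) :=
      fun k => (continuous_const.sub (φ k).continuous).div_const _
    have hlaff : ∀ (k : Fin p), β k < 0 → ∀ (x y : X) (s t : ℝ), s + t = 1 →
        l k (s • x + t • y) = s * l k x + t * l k y := by
      intro k hk x y s t hst
      have hnum : c k - φ k (s • x + t • y) = s * (c k - φ k x) + t * (c k - φ k y) := by
        rw [map_add, map_smul, map_smul]
        simp only [smul_eq_mul]
        linear_combination (-(c k)) * hst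
      show (c k - φ k (s • x + t • y)) / β k
          = s * ((c k - φ k x) / β k) + t * ((c k - φ k y) / β k)
      rw [hnum, add_div, mul_div_assoc, mul_div_assoc]
    set m' : ℝ := gr₀ - hr₀ with hm'
    refine ⟨p, fun k => if hk : β k < 0 then
        {x | x ∈ C ∧ h x ≤ ((l k x : ℝ) : EReal) ∧ g x ≤ ((m' + l k x : ℝ) : EReal)}
      else ∅, ?_, ?_⟩
    · intro k
      by_cases hk : β k < 0
      · simp only [dif_pos hk]
        refine ⟨?_, ?_, fun x hx => hx.1⟩
        · have heq : {x | x ∈ C ∧ h x ≤ ((l k x : ℝ) : EReal) ∧ g x ≤ ((m' + l k x : ℝ) : EReal)}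
              = C ∩ ({x | h x ≤ ((l k x : ℝ) : EReal)} ∩ {x | g x ≤ ((m' + l k x : ℝ) : EReal)}) := by
            ext x; simp [Set.mem_inter_iff]; tauto
          rw [heq]
          refine hC2.inter (IsClosed.inter ?_ ?_)
          · have : {x | h x ≤ ((l k x : ℝ) : EReal)}
                = (fun x => (x, l k x)) ⁻¹' epigraph h := rfl
            rw [this]
            exact hepicl.preimage (continuous_id.prodMk (hlcont k))
          · exact closed_sublevel hg1 (continuous_const.add (hlcont k))
        · intro x hx y hy s t hs ht hst
          obtain ⟨hxC, hx1, hx2⟩ := hx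
          obtain ⟨hyC, hy1, hy2⟩ := hy
          refine ⟨hC3 hxC hyC hs ht hst, ?_, ?_⟩
          · have hx' : (x, l k x) ∈ epigraph h := hx1
            have hy' : (y, l k y) ∈ epigraph h := hy1
            have hcomb := hepiconv hx' hy' hs ht hst
            have heq : s • ((x, l k x) : X × ℝ) + t • (y, l k y)
                = (s • x + t • y, l k (s • x + t • y)) := by
              rw [hlaff k hk x y s t hst]
              simp [Prod.ext_iff, smul_eq_mul]
            rw [heq] at hcomb
            exact hcomb
          · have hx' : (x, m' + l k x) ∈ epigraph g := hx2
            have hy' : (y, m' + l k y) ∈ epigraph g := hy2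
            have hcomb := hg3 hx' hy' hs ht hst
            have heq : s • ((x, m' + l k x) : X × ℝ) + t • (y, m' + l k y)
                = (s • x + t • y, m' + l k (s • x + t • y)) := by
              rw [hlaff k hk x y s t hst]
              simp [Prod.ext_iff, smul_eq_mul]
              ring_nf
              linear_combination m' * hst
            rw [heq] at hcomb
            exact hcomb
      · simp only [dif_neg hk]
        exact ⟨isClosed_empty, convex_empty, Set.empty_subset _⟩
    · ext x
      simp only [Set.mem_setOf_eq, Set.mem_iUnion]
      constructor
      · intro hx
        obtain ⟨hxC, hxmin⟩ := hx
        obtain ⟨hr, hxh⟩ := hhC x hxC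
        obtain ⟨gr, hxg⟩ := hgC x hxC
        have hdx := dc_formula g h x gr hr hxg hxh
        have hdx₀ := dc_formula g h x₀ gr₀ hr₀ hx₀g hx₀h
        have e1 : dcObj g h x ≤ dcObj g h x₀ := hxmin x₀ hx₀C
        have e2 : dcObj g h x₀ ≤ dcObj g h x := hx₀min x hxC
        have e3 : gr - hr = m' := by
          rw [hdx, hdx₀] at e1 e2
          have e1' := EReal.coe_le_coe_iff.mp e1
          have e2' := EReal.coe_le_coe_iff.mp e2
          rw [hm']; linarith
        obtain ⟨k, hk, hkeq⟩ := hmax x hxC hr hxh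
        refine ⟨k, ?_⟩
        rw [dif_pos hk]
        refine ⟨hxC, ?_, ?_⟩
        · rw [hxh, hkeq]
        · rw [hxg]
          have : gr = m' + l k x := by rw [hkeq]; linarith
          rw [this]
      · rintro ⟨k, hk⟩
        by_cases hkb : β k < 0
        · rw [dif_pos hkb] at hk
          obtain ⟨hxC, hx1, hx2⟩ := hk
          obtain ⟨hr, hxh⟩ := hhC x hxC
          obtain ⟨gr, hxg⟩ := hgC x hxC
          have hle1 : l k x ≤ hr := by
            have := ((hchar x hxC hr hr hxh).mp (le_of_eq hxh)) k hkb
            exact this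
          have hle2 : hr ≤ l k x := by
            rw [hxh] at hx1; exact_mod_cast hx1
          have hgle : gr ≤ m' + l k x := by
            rw [hxg] at hx2; exact_mod_cast hx2
          refine ⟨hxC, fun y hy => ?_⟩
          have hdx := dc_formula g h x gr hr hxg hxh
          have hdx₀ := dc_formula g h x₀ gr₀ hr₀ hx₀g hx₀h
          have e1 : dcObj g h x₀ ≤ dcObj g h y := hx₀min y hy
          calc dcObj g h x = ((gr - hr : ℝ) : EReal) := hdx
            _ ≤ ((gr₀ - hr₀ : ℝ) : EReal) := by
                apply EReal.coe_le_coe_iff.mpr; rw [hm'] at hgle; linarith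
            _ = dcObj g h x₀ := hdx₀.symm
            _ ≤ dcObj g h y := e1
        · rw [dif_neg hkb] at hk
          exact absurd hk (Set.notMem_empty x)
  · push_neg at hS
    refine ⟨0, fun _ => ∅, fun i => ⟨isClosed_empty, convex_empty, Set.empty_subset _⟩, ?_⟩
    ext x
    simp only [Set.mem_setOf_eq, Set.mem_iUnion, Set.mem_empty_iff_false, exists_false,
      iff_false]
    exact hS x
end

section
/- Let g: X → ℝ ∪ {+∞} be a lower semicontinuous, proper, convex function, h: X → ℝ ∪ {+∞} a proper generalized polyhedral convex function with representation h(x) = max_{j∈J}(⟨v_j*, x⟩ + β_j) for x ∈ dom h, and C ⊆ X a nonempty closed convex set with C ⊆ dom g and C ⊆ int(dom h). Then inf_{x∈C}(g(x) − h(x)) = min_{j∈J} α_j, where α_j = inf_{x∈C}(g(x) − ⟨v_j*, x⟩ − β_j); moreover, the global solution set S of the problem: minimize g(x) − h(x) subject to x ∈ C, satisfies S = ⋃_{j∈J*} S^j, where J* = {j ∈ J : α_j = min_{j'∈J} α_{j'}} and S^j is the solution set of the convex problem: minimize g(x) − ⟨v_j*, x⟩ − β_j subject to x ∈ C. -/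
open Pointwise Topology

/-- the optimal value of the DC program equals the minimum over `j ∈ J` of
the optimal values of the convex programs `min_{x ∈ C} (g(x) - ⟨v_j, x⟩ - β_j)`, and the
global solution set is the union of the solution sets of the optimal such programs. -/
theorem stmt8 {X : Type*} [AddCommGroup X] [Module ℝ X] [TopologicalSpace X]
    [IsTopologicalAddGroup X] [ContinuousSMul ℝ X] [LocallyConvexSpace ℝ X] [T2Space X]
    (κ : Type*) [Fintype κ] [Nonempty κ]
    (v : κ → (X →L[ℝ] ℝ)) (b : κ → ℝ)
    (g h : X → EReal)
    (hg1 : LowerSemicontinuous g) (hg2 : ProperFn g) (hg3 : ConvexFn g)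
    (hh2 : ProperFn h) (hh3 : IsGPCF X h)
    (hhrep : ∀ x ∈ domFn h,
      h x = ((Finset.univ.sup' Finset.univ_nonempty fun j => v j x + b j : ℝ) : EReal))
    (C : Set X) (hC1 : C.Nonempty) (hC2 : IsClosed C) (hC3 : Convex ℝ C)
    (hCg : C ⊆ domFn g) (hCh : C ⊆ interior (domFn h))
    (aVal : κ → EReal)
    (haVal : ∀ j, aVal j = ⨅ x ∈ C, (g x - ((v j x + b j : ℝ) : EReal))) :
    (⨅ x ∈ C, dcObj g h x) = (⨅ j, aVal j) ∧
      {x : X | IsSolution g h C x} =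
        ⋃ j ∈ {j : κ | aVal j = ⨅ j', aVal j'},
          {x ∈ C | ∀ x' ∈ C,
            g x - ((v j x + b j : ℝ) : EReal) ≤ g x' - ((v j x' + b j : ℝ) : EReal)} := by
  set f : κ → X → EReal := fun j x => g x - ((v j x + b j : ℝ) : EReal) with hf
  -- key: on C, the DC objective is the pointwise infimum of the f j
  have hkey : ∀ x ∈ C, dcObj g h x = ⨅ j, f j x := by
    intro x hx
    have hgx : g x ≠ ⊤ := hCg hx
    obtain ⟨r, hr⟩ : ∃ r : ℝ, g x = r := by
      have hgb := hg2.2 x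
      lift g x to ℝ using ⟨hgx, hgb⟩ with r; exact ⟨r, rfl⟩
    have hxd : x ∈ domFn h := interior_subset (hCh hx)
    have hhx := hhrep x hxd
    set M : ℝ := Finset.univ.sup' Finset.univ_nonempty fun j => v j x + b j with hM
    have hdc : dcObj g h x = ((r - M : ℝ) : EReal) := by
      rw [dcObj]
      rw [if_neg (by simp [hgx]), hhx, hr, ← EReal.coe_sub]
    rw [hdc]
    apply le_antisymm
    · refine le_iInf fun j => ?_
      have hle : v j x + b j ≤ M :=
        Finset.le_sup' (fun j => v j x + b j) (Finset.mem_univ j)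
      have heq : f j x = ((r - (v j x + b j) : ℝ) : EReal) := by
        show g x - ((v j x + b j : ℝ) : EReal) = _
        rw [hr, ← EReal.coe_sub]
      rw [heq]
      exact EReal.coe_le_coe_iff.mpr (by linarith)
    · obtain ⟨j₀, -, hj₀⟩ := Finset.exists_mem_eq_sup' Finset.univ_nonempty
        (fun j => v j x + b j)
      refine le_trans (iInf_le _ j₀) (le_of_eq ?_)
      show g x - ((v j₀ x + b j₀ : ℝ) : EReal) = ((r - M : ℝ) : EReal)
      rw [hr, ← EReal.coe_sub, hM, hj₀]
  -- Part 1
  have part1 : (⨅ x ∈ C, dcObj g h x) = (⨅ j, aVal j) := by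
    apply le_antisymm
    · refine le_iInf fun j => ?_
      rw [haVal j]
      refine le_iInf₂ fun x hx => ?_
      refine le_trans (iInf₂_le x hx) ?_
      rw [hkey x hx]
      exact iInf_le _ j
    · refine le_iInf₂ fun x hx => ?_
      rw [hkey x hx]
      refine le_iInf fun j => ?_
      refine le_trans (iInf_le _ j) ?_
      rw [haVal j]
      exact iInf₂_le x hx
  refine ⟨part1, ?_⟩
  ext x₀
  simp only [Set.mem_setOf_eq, Set.mem_iUnion, IsSolution, Set.mem_sep_iff,
    exists_prop]
  constructor
  · rintro ⟨hx₀, hmin⟩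
    -- pick j₀ minimizing f j x₀
    obtain ⟨j₀, hj₀⟩ := Finite.exists_min fun j => f j x₀
    have hF₀ : dcObj g h x₀ = f j₀ x₀ := by
      rw [hkey x₀ hx₀]
      exact le_antisymm (iInf_le _ j₀) (le_iInf hj₀)
    have hsol : ∀ x' ∈ C, f j₀ x₀ ≤ f j₀ x' := by
      intro x' hx'
      refine le_trans (hF₀ ▸ hmin x' hx') ?_
      rw [hkey x' hx']
      exact iInf_le _ j₀
    have haj₀ : aVal j₀ = f j₀ x₀ := by
      rw [haVal j₀]
      exact le_antisymm (iInf₂_le x₀ hx₀) (le_iInf₂ hsol)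
    have hopt : aVal j₀ = ⨅ j', aVal j' := by
      apply le_antisymm
      · refine le_iInf fun j => ?_
        rw [haj₀, haVal j]
        refine le_iInf₂ fun x hx => ?_
        refine le_trans (hF₀ ▸ hmin x hx) ?_
        rw [hkey x hx]
        exact iInf_le _ j
      · exact iInf_le _ j₀
    exact ⟨j₀, hopt, hx₀, hsol⟩
  · rintro ⟨j, hopt, hx₀, hsol⟩
    refine ⟨hx₀, fun x hx => ?_⟩
    have hfx₀ : f j x₀ = aVal j := by
      rw [haVal j]
      exact le_antisymm (le_iInf₂ hsol) (iInf₂_le x₀ hx₀)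
    rw [hkey x₀ hx₀, hkey x hx]
    refine le_trans (iInf_le _ j) ?_
    refine le_iInf fun j' => ?_
    calc f j x₀ = ⨅ j'', aVal j'' := by rw [hfx₀, hopt]
      _ ≤ aVal j' := iInf_le _ j'
      _ ≤ f j' x := by rw [haVal j']; exact iInf₂_le x hx
end

section
/- Let g, h: X → ℝ ∪ {+∞} be proper generalized polyhedral convex functions and C ⊆ X a nonempty generalized polyhedral convex set with C ⊆ dom g and C ⊆ int(dom h). Then the set of local solutions of the problem: minimize g(x) − h(x) subject to x ∈ C, is the union of finitely many semi-closed generalized polyhedral convex subsets of C, and the set of global solutions is the union of finitely many generalized polyhedral convex sets. -/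
open Pointwise Topology

section Helpers

variable {X : Type*} [AddCommGroup X] [Module ℝ X] [TopologicalSpace X]

lemma isGPCS_empty : IsGPCS X (∅ : Set X) := by
  refine ⟨⊥, 0, fun i => i.elim0, fun i => i.elim0, ?_, ?_⟩
  · rw [AffineSubspace.bot_coe]; exact isClosed_empty
  · ext x; simp [AffineSubspace.notMem_bot]

lemma isGPCS_inter_halfspaces {S : Set X} (hS : IsGPCS X S) {ι : Type*} [Fintype ι]
    (w : ι → (X →L[ℝ] ℝ)) (d : ι → ℝ) :
    IsGPCS X (S ∩ {x | ∀ i, w i x ≤ d i}) := by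
  obtain ⟨L, p, a, c, hL, hSeq⟩ := hS
  set e := Fintype.equivFin ι
  refine ⟨L, p + Fintype.card ι, Fin.append a (w ∘ e.symm), Fin.append c (d ∘ e.symm), hL, ?_⟩
  ext x
  simp only [hSeq, Set.mem_inter_iff, Set.mem_setOf_eq]
  constructor
  · rintro ⟨⟨hx, h1⟩, h2⟩
    refine ⟨hx, fun k => ?_⟩
    refine Fin.addCases (fun i => ?_) (fun i => ?_) k
    · simpa [Fin.append_left] using h1 i
    · simpa [Fin.append_right] using h2 (e.symm i)
  · rintro ⟨hx, hh⟩
    refine ⟨⟨hx, fun k => ?_⟩, fun i => ?_⟩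
    · simpa [Fin.append_left] using hh (Fin.castAdd _ k)
    · have := hh (Fin.natAdd p (e i))
      simpa [Fin.append_right] using this

lemma gpcs_convex {S : Set X} (hS : IsGPCS X S) : Convex ℝ S := by
  obtain ⟨L, p, a, c, hL, rfl⟩ := hS
  have : {x : X | x ∈ L ∧ ∀ k, a k x ≤ c k} = (L : Set X) ∩ ⋂ k, {x | a k x ≤ c k} := by
    ext x; simp [Set.mem_iInter]
  rw [this]
  exact L.convex.inter (convex_iInter fun k =>
    convex_halfSpace_le (LinearMap.isLinear ((a k) : X →ₗ[ℝ] ℝ)) (c k))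

lemma gpcf_repr_s9 {ψ : X → EReal} (hp : ProperFn ψ) (hg : IsGPCF X ψ) :
    ∃ (p : ℕ) (K : Finset (Fin p)) (hK : K.Nonempty) (v : Fin p → (X →L[ℝ] ℝ)) (s : Fin p → ℝ),
      ∀ x, ψ x ≠ ⊤ → ψ x = ((K.sup' hK fun k => v k x + s k : ℝ) : EReal) := by
  classical
  obtain ⟨M, p, a, c, _hMcl, hepi⟩ := hg
  obtain ⟨⟨x₀, hx₀⟩, hbot⟩ := hp
  set r₀ := (ψ x₀).toReal with hr₀
  have hψx₀ : ψ x₀ = (r₀ : EReal) := (EReal.coe_toReal hx₀ (hbot x₀)).symm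
  have hmem : ∀ t : ℝ, r₀ ≤ t → (x₀, t) ∈ epigraph ψ := by
    intro t ht
    show ψ x₀ ≤ (t : EReal)
    rw [hψx₀]; exact_mod_cast ht
  set b : Fin p → (X →L[ℝ] ℝ) := fun k => (a k).comp (ContinuousLinearMap.inl ℝ X ℝ) with hb
  set β : Fin p → ℝ := fun k => a k ((0 : X), (1 : ℝ)) with hβdef
  have hdecomp : ∀ (k : Fin p) (x : X) (t : ℝ), a k (x, t) = b k x + t * β k := by
    intro k x t
    have hxt : ((x, t) : X × ℝ) = ((x, 0) : X × ℝ) + t • (((0 : X), (1 : ℝ)) : X × ℝ) := by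
      simp [Prod.ext_iff]
    rw [hxt, map_add, map_smul]
    simp [hb, hβdef, smul_eq_mul]
  have hM0 : ((x₀, r₀) : X × ℝ) ∈ M := by
    have := hmem r₀ le_rfl; rw [hepi] at this; exact this.1
  have hM1 : ((x₀, r₀ + 1) : X × ℝ) ∈ M := by
    have := hmem (r₀ + 1) (by linarith); rw [hepi] at this; exact this.1
  have hdir : (((0 : X), (1 : ℝ)) : X × ℝ) ∈ M.direction := by
    have := AffineSubspace.vsub_mem_direction hM1 hM0
    simpa [Prod.ext_iff] using this
  have hline : ∀ z ∈ M, ∀ t : ℝ, z + t • (((0 : X), (1 : ℝ)) : X × ℝ) ∈ M := by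
    intro z hz t
    have := AffineSubspace.vadd_mem_of_mem_direction (Submodule.smul_mem _ t hdir) hz
    simpa [vadd_eq_add, add_comm] using this
  have hβ : ∀ k, β k ≤ 0 := by
    intro k
    by_contra hpos
    push_neg at hpos
    set t := max r₀ ((c k - b k x₀ + 1) / β k) with htdef
    have h1 := hmem t (le_max_left _ _)
    rw [hepi] at h1
    have h2 := h1.2 k
    rw [hdecomp] at h2
    have h3 : (c k - b k x₀ + 1) / β k ≤ t := le_max_right _ _
    have h4 : c k - b k x₀ + 1 ≤ t * β k := (div_le_iff₀ hpos).1 h3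
    linarith
  set K : Finset (Fin p) := Finset.univ.filter fun k => β k < 0 with hK
  have hKne : K.Nonempty := by
    by_contra hemp
    have hz : ∀ k, β k = 0 := by
      intro k
      refine le_antisymm (hβ k) (not_lt.1 fun hlt => hemp ⟨k, ?_⟩)
      exact Finset.mem_filter.2 ⟨Finset.mem_univ k, hlt⟩
    have hm : ((x₀, r₀ - 1) : X × ℝ) ∈ M := by
      have := hline _ hM0 (-1)
      rw [sub_eq_add_neg]
      simpa [Prod.ext_iff] using this
    have hr : ((x₀, r₀ - 1) : X × ℝ) ∈ epigraph ψ := by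
      rw [hepi]
      refine ⟨hm, fun k => ?_⟩
      have hh := hmem r₀ le_rfl
      rw [hepi] at hh
      have h2 := hh.2 k
      rw [hdecomp] at h2
      rw [hdecomp, hz k]
      rw [hz k] at h2
      linarith
    have : ψ x₀ ≤ ((r₀ - 1 : ℝ) : EReal) := hr
    rw [hψx₀] at this
    have : r₀ ≤ r₀ - 1 := by exact_mod_cast this
    linarith
  have hKlt : ∀ k ∈ K, β k < 0 := fun k hk => (Finset.mem_filter.1 hk).2
  set v : Fin p → (X →L[ℝ] ℝ) := fun k => (-(β k)⁻¹) • b k with hv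
  set s : Fin p → ℝ := fun k => (β k)⁻¹ * c k with hs
  have key : ∀ k, β k < 0 → ∀ x : X, v k x + s k = (c k - b k x) / β k := by
    intro k hk x
    have hkne : β k ≠ 0 := ne_of_lt hk
    simp only [hv, hs, ContinuousLinearMap.smul_apply, smul_eq_mul]
    field_simp
    ring
  refine ⟨p, K, hKne, v, s, ?_⟩
  intro x hx
  have hxr : ψ x = (((ψ x).toReal : ℝ) : EReal) := (EReal.coe_toReal hx (hbot x)).symm
  set r := (ψ x).toReal with hrdef
  have hxe : ((x, r) : X × ℝ) ∈ epigraph ψ := by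
    show ψ x ≤ (r : EReal)
    rw [hxr]
  rw [hepi] at hxe
  set m := K.sup' hKne fun k => v k x + s k with hm
  have hml : m ≤ r := by
    refine Finset.sup'_le _ _ fun k hk => ?_
    have hneg := hKlt k hk
    have h2 := hxe.2 k
    rw [hdecomp] at h2
    rw [key k hneg, div_le_iff_of_neg hneg]
    linarith
  have hmM : ((x, m) : X × ℝ) ∈ M := by
    have := hline _ hxe.1 (m - r)
    have he : ((x, r) : X × ℝ) + (m - r) • (((0 : X), (1 : ℝ)) : X × ℝ) = (x, m) := by
      simp [Prod.ext_iff]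
    rwa [he] at this
  have hme : ((x, m) : X × ℝ) ∈ epigraph ψ := by
    rw [hepi]
    refine ⟨hmM, fun k => ?_⟩
    rw [hdecomp]
    by_cases hk : β k < 0
    · have hkK : k ∈ K := Finset.mem_filter.2 ⟨Finset.mem_univ k, hk⟩
      have hle : v k x + s k ≤ m := Finset.le_sup' (fun k => v k x + s k) hkK
      rw [key k hk] at hle
      have := (div_le_iff_of_neg hk).1 hle
      linarith
    · have h0 : β k = 0 := le_antisymm (hβ k) (not_lt.1 hk)
      have h2 := hxe.2 k
      rw [hdecomp] at h2
      rw [h0] at h2 ⊢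
      linarith
  have hrm : ψ x ≤ ((m : ℝ) : EReal) := hme
  rw [hxr] at hrm ⊢
  have : r ≤ m := by exact_mod_cast hrm
  norm_cast
  linarith

end Helpers

/-- for a gpdc program, the local solution set is the union of finitely
many semi-closed generalized polyhedral convex subsets of `C`, and the global solution
set is the union of finitely many generalized polyhedral convex sets. -/
theorem stmt9 {X : Type*} [AddCommGroup X] [Module ℝ X] [TopologicalSpace X]
    [IsTopologicalAddGroup X] [ContinuousSMul ℝ X] [LocallyConvexSpace ℝ X] [T2Space X]
    (g h : X → EReal)
    (hg2 : ProperFn g) (hg3 : IsGPCF X g)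
    (hh2 : ProperFn h) (hh3 : IsGPCF X h)
    (C : Set X) (hC1 : C.Nonempty) (hC2 : IsGPCS X C)
    (hCg : C ⊆ domFn g) (hCh : C ⊆ interior (domFn h)) :
    (∃ (n : ℕ) (A : Fin n → Set X), (∀ i, IsSemiClosedGPCSIn C (A i)) ∧
      {x : X | IsLocalSolution g h C x} = ⋃ i, A i) ∧
    (∃ (m : ℕ) (B : Fin m → Set X), (∀ i, IsGPCS X (B i)) ∧
      {x : X | IsSolution g h C x} = ⋃ i, B i) := by
  classical
  obtain ⟨q, Kg, hKg, u, rr, hgrepr⟩ := gpcf_repr_s9 hg2 hg3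
  obtain ⟨p, Kh, hKh, v, s, hhrepr⟩ := gpcf_repr_s9 hh2 hh3
  set G : X → ℝ := fun x => Kg.sup' hKg fun i => u i x + rr i with hGdef
  set H : X → ℝ := fun x => Kh.sup' hKh fun j => v j x + s j with hHdef
  have hGle : ∀ (x : X), ∀ i ∈ Kg, u i x + rr i ≤ G x := by
    intro x i hi; simp only [hGdef]; exact Finset.le_sup' (fun i => u i x + rr i) hi
  have hGsup : ∀ (x : X) (cc : ℝ), (∀ i ∈ Kg, u i x + rr i ≤ cc) → G x ≤ cc := by
    intro x cc hb; simp only [hGdef]; exact Finset.sup'_le _ _ hb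
  have hHle : ∀ (x : X), ∀ j ∈ Kh, v j x + s j ≤ H x := by
    intro x j hj; simp only [hHdef]; exact Finset.le_sup' (fun j => v j x + s j) hj
  have hHsup : ∀ (x : X) (cc : ℝ), (∀ j ∈ Kh, v j x + s j ≤ cc) → H x ≤ cc := by
    intro x cc hb; simp only [hHdef]; exact Finset.sup'_le _ _ hb
  have hHex : ∀ x : X, ∃ j ∈ Kh, H x = v j x + s j := by
    intro x; simp only [hHdef]; exact Finset.exists_mem_eq_sup' hKh _
  have hgC : ∀ x ∈ C, g x = ((G x : ℝ) : EReal) := fun x hx => hgrepr x (hCg hx)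
  have hhC : ∀ x ∈ C, h x = ((H x : ℝ) : EReal) := fun x hx =>
    hhrepr x (interior_subset (hCh hx))
  set F : X → ℝ := fun x => G x - H x with hFdef
  have hdc : ∀ x ∈ C, dcObj g h x = ((F x : ℝ) : EReal) := by
    intro x hx
    have h1 : g x ≠ ⊤ := hCg hx
    simp only [dcObj]
    rw [if_neg (fun hcon => h1 hcon.1), hgC x hx, hhC x hx, ← EReal.coe_sub]
  have hFle : ∀ x ∈ C, ∀ y ∈ C, (dcObj g h x ≤ dcObj g h y ↔ F x ≤ F y) := by
    intro x hx y hy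
    rw [hdc x hx, hdc y hy]
    exact EReal.coe_le_coe_iff
  set φ : Fin p → X → ℝ := fun j x => G x - (v j x + s j) with hφdef
  have hφF : ∀ (x : X), ∀ j ∈ Kh, F x ≤ φ j x := fun x j hj =>
    sub_le_sub_left (hHle x j hj) _
  have hCconv : Convex ℝ C := gpcs_convex hC2
  have hφconv : ∀ (j : Fin p) (x y : X) (t : ℝ), 0 ≤ t → t ≤ 1 →
      φ j ((1 - t) • x + t • y) ≤ (1 - t) * φ j x + t * φ j y := by
    intro j x y t ht0 ht1
    have h1 : G ((1 - t) • x + t • y) ≤ (1 - t) * φ j x + t * φ j y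
        + (v j ((1 - t) • x + t • y) + s j) := by
      refine hGsup _ _ fun i hi => ?_
      have e1 : u i ((1 - t) • x + t • y) = (1 - t) * u i x + t * u i y := by
        rw [map_add, map_smul, map_smul]; simp [smul_eq_mul]
      have e2 : v j ((1 - t) • x + t • y) = (1 - t) * v j x + t * v j y := by
        rw [map_add, map_smul, map_smul]; simp [smul_eq_mul]
      have p1 : u i x + rr i - (v j x + s j) ≤ φ j x :=
        sub_le_sub_right (hGle x i hi) _
      have p2 : u i y + rr i - (v j y + s j) ≤ φ j y :=
        sub_le_sub_right (hGle y i hi) _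
      have q1 := mul_le_mul_of_nonneg_left p1 (by linarith : (0:ℝ) ≤ 1 - t)
      have q2 := mul_le_mul_of_nonneg_left p2 ht0
      rw [e1, e2]
      nlinarith [q1, q2]
    simp only [hφdef] at h1 ⊢
    linarith
  have claimA : ∀ z, IsLocalSolution g h C z → ∀ j ∈ Kh, v j z + s j = H z →
      ∀ y ∈ C, φ j z ≤ φ j y := by
    intro z hloc j hjKh hact y hy
    obtain ⟨hzC, U, hU, hmin⟩ := hloc
    have hlocφ : ∀ x ∈ C ∩ U, φ j z ≤ φ j x := by
      intro x hx
      have h1 : F z ≤ F x := (hFle z hzC x hx.1).1 (hmin x hx)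
      have h2 : F x ≤ φ j x := hφF x j hjKh
      have h3 : φ j z = F z := by
        simp only [hφdef, hFdef]; rw [hact]
      linarith
    set mp : ℝ → X := fun t => z + t • (y - z) with hmp
    have hmc : Continuous mp := continuous_const.add (continuous_id.smul continuous_const)
    have hm0 : mp 0 = z := by simp [hmp]
    have hpre : mp ⁻¹' U ∈ 𝓝 (0 : ℝ) := by
      refine hmc.continuousAt.preimage_mem_nhds ?_
      rw [hm0]; exact hU
    obtain ⟨ε, hε, hball⟩ := Metric.mem_nhds_iff.1 hpre
    set t := min (ε / 2) 1 with ht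
    have ht0 : 0 < t := lt_min (by linarith) one_pos
    have ht1 : t ≤ 1 := min_le_right _ _
    have htU : mp t ∈ U := by
      refine hball ?_
      rw [Metric.mem_ball, Real.dist_eq, sub_zero, abs_of_pos ht0]
      calc t ≤ ε / 2 := min_le_left _ _
        _ < ε := by linarith
    have hcomb : mp t = (1 - t) • z + t • y := by
      simp only [hmp]
      module
    have htC : mp t ∈ C := by
      rw [hcomb]
      exact hCconv hzC hy (by linarith) ht0.le (by ring)
    have h4 : φ j z ≤ φ j (mp t) := hlocφ _ ⟨htC, htU⟩
    have h5 : φ j (mp t) ≤ (1 - t) * φ j z + t * φ j y := by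
      rw [hcomb]; exact hφconv j z y t ht0.le ht1
    have h6 : t * φ j z ≤ t * φ j y := by nlinarith [h4, h5]
    exact le_of_mul_le_mul_left h6 ht0
  have claimB : ∀ z ∈ C, (∀ j ∈ Kh, v j z + s j = H z → ∀ y ∈ C, φ j z ≤ φ j y) →
      IsLocalSolution g h C z := by
    intro z hzC hglob
    obtain ⟨j₀, hj₀Kh, hj₀⟩ := hHex z
    set U : Set X := ⋂ j ∈ Kh.filter (fun j => v j z + s j < H z),
      {x | v j x + s j < v j₀ x + s j₀} with hUdef
    have hUopen : IsOpen U := by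
      refine isOpen_biInter_finset fun j _ => ?_
      have heq : {x : X | v j x + s j < v j₀ x + s j₀}
          = (fun x => (v j - v j₀) x) ⁻¹' Set.Iio (s j₀ - s j) := by
        ext x
        simp only [Set.mem_setOf_eq, Set.mem_preimage, Set.mem_Iio,
          ContinuousLinearMap.sub_apply]
        constructor <;> intro <;> linarith
      rw [heq]
      exact (v j - v j₀).continuous.isOpen_preimage _ isOpen_Iio
    have hzU : z ∈ U := by
      simp only [hUdef, Set.mem_iInter, Set.mem_setOf_eq]
      intro j hj
      have hjlt := (Finset.mem_filter.1 hj).2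
      linarith [hj₀, hjlt]
    refine ⟨hzC, U, hUopen.mem_nhds hzU, ?_⟩
    intro x hx
    refine (hFle z hzC x hx.1).2 ?_
    obtain ⟨j₁, hj₁Kh, hj₁⟩ := hHex x
    have hj₁le : v j₁ z + s j₁ ≤ H z := hHle z j₁ hj₁Kh
    have hj₁act : v j₁ z + s j₁ = H z := by
      by_contra hne
      have hlt : v j₁ z + s j₁ < H z := lt_of_le_of_ne hj₁le hne
      have hj₁f : j₁ ∈ Kh.filter (fun j => v j z + s j < H z) :=
        Finset.mem_filter.2 ⟨hj₁Kh, hlt⟩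
      have hxU := hx.2
      simp only [hUdef, Set.mem_iInter, Set.mem_setOf_eq] at hxU
      have h7 := hxU j₁ hj₁f
      have h8 : v j₀ x + s j₀ ≤ H x := hHle x j₀ hj₀Kh
      linarith [hj₁]
    have h9 := hglob j₁ hj₁Kh hj₁act x hx.1
    simp only [hφdef] at h9
    simp only [hFdef]
    linarith [hj₁, hj₁act]
  set Mm : Fin p → Set X := fun j => {x | x ∈ C ∧ ∀ y ∈ C, φ j x ≤ φ j y} with hMmdef
  have hsubl : ∀ (j : Fin p) (μ : ℝ), IsGPCS X {x | x ∈ C ∧ φ j x ≤ μ} := by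
    intro j μ
    have heq : {x | x ∈ C ∧ φ j x ≤ μ} = C ∩ {x | ∀ i : Fin q,
        (if i ∈ Kg then u i - v j else 0) x ≤ (if i ∈ Kg then μ + s j - rr i else 0)} := by
      ext x
      simp only [Set.mem_setOf_eq, Set.mem_inter_iff]
      constructor
      · rintro ⟨hxC, hxμ⟩
        refine ⟨hxC, fun i => ?_⟩
        by_cases hi : i ∈ Kg
        · simp only [if_pos hi, ContinuousLinearMap.sub_apply]
          have h1 := hGle x i hi
          simp only [hφdef] at hxμ
          linarith
        · simp [if_neg hi]
      · rintro ⟨hxC, hc⟩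
        refine ⟨hxC, ?_⟩
        simp only [hφdef]
        have h1 : G x ≤ μ + (v j x + s j) := by
          refine hGsup x _ fun i hi => ?_
          have h2 := hc i
          simp only [if_pos hi, ContinuousLinearMap.sub_apply] at h2
          linarith
        linarith
    rw [heq]
    exact isGPCS_inter_halfspaces hC2 _ _
  have hMgpcs : ∀ j, IsGPCS X (Mm j) := by
    intro j
    by_cases hne : (Mm j).Nonempty
    · obtain ⟨xh, hxh⟩ := hne
      simp only [hMmdef, Set.mem_setOf_eq] at hxh
      have heq : Mm j = {x | x ∈ C ∧ φ j x ≤ φ j xh} := by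
        ext yy
        simp only [hMmdef, Set.mem_setOf_eq]
        constructor
        · rintro ⟨hyC, hym⟩; exact ⟨hyC, hym xh hxh.1⟩
        · rintro ⟨hyC, hyle⟩
          exact ⟨hyC, fun z hzC => le_trans hyle (hxh.2 z hzC)⟩
      rw [heq]
      exact hsubl j _
    · rw [Set.not_nonempty_iff_eq_empty.1 hne]
      exact isGPCS_empty
  set xhat : Fin p → X := fun j => if hne : (Mm j).Nonempty then hne.choose else hC1.choose
    with hxhatdef
  have hxhatMm : ∀ j, (Mm j).Nonempty → xhat j ∈ Mm j := by
    intro j hne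
    simp only [hxhatdef, dif_pos hne]
    exact hne.choose_spec
  set μ : Fin p → ℝ := fun j => φ j (xhat j) with hμdef
  set P : Finset (Fin p) → Set X := fun T => C ∩ {x | ∀ ji : Fin p × Fin q,
    (if ji.1 ∈ T ∧ ji.2 ∈ Kg then u ji.2 - v ji.1 else 0) x
      ≤ (if ji.1 ∈ T ∧ ji.2 ∈ Kg then μ ji.1 + s ji.1 - rr ji.2 else 0)} with hPdef
  have hPgpcs : ∀ T, IsGPCS X (P T) := fun T => isGPCS_inter_halfspaces hC2 _ _
  have hPsubC : ∀ T, P T ⊆ C := fun T => Set.inter_subset_left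
  have hPmem : ∀ (T : Finset (Fin p)) (x : X), x ∈ P T ↔ x ∈ C ∧ ∀ j ∈ T, φ j x ≤ μ j := by
    intro T x
    simp only [hPdef, Set.mem_inter_iff, Set.mem_setOf_eq]
    constructor
    · rintro ⟨hxC, hc⟩
      refine ⟨hxC, fun j hj => ?_⟩
      simp only [hφdef]
      have h1 : G x ≤ μ j + (v j x + s j) := by
        refine hGsup x _ fun i hi => ?_
        have h2 := hc (j, i)
        simp only [if_pos (show j ∈ T ∧ i ∈ Kg from ⟨hj, hi⟩),
          ContinuousLinearMap.sub_apply] at h2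
        linarith
      linarith
    · rintro ⟨hxC, hc⟩
      refine ⟨hxC, fun ji => ?_⟩
      by_cases hji : ji.1 ∈ T ∧ ji.2 ∈ Kg
      · simp only [if_pos hji, ContinuousLinearMap.sub_apply]
        have h1 := hGle x ji.2 hji.2
        have h2 := hc ji.1 hji.1
        simp only [hφdef] at h2
        linarith
      · simp [if_neg hji]
  set V : Finset (Fin p) → Set X := fun T => ⋂ j ∈ T, ⋂ j' ∈ Kh \ T,
    {x | v j' x + s j' < v j x + s j} with hVdef
  have hVopen : ∀ T, IsOpen (V T) := by
    intro T
    refine isOpen_biInter_finset fun j _ => isOpen_biInter_finset fun j' _ => ?_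
    have heq : {x : X | v j' x + s j' < v j x + s j}
        = (fun x => (v j' - v j) x) ⁻¹' Set.Iio (s j - s j') := by
      ext x
      simp only [Set.mem_setOf_eq, Set.mem_preimage, Set.mem_Iio,
        ContinuousLinearMap.sub_apply]
      constructor <;> intro <;> linarith
    rw [heq]
    exact (v j' - v j).continuous.isOpen_preimage _ isOpen_Iio
  have hVconv : ∀ T, Convex ℝ (V T) := by
    intro T
    refine convex_iInter₂ fun j _ => convex_iInter₂ fun j' _ => ?_
    have heq : {x : X | v j' x + s j' < v j x + s j}
        = {x : X | ((v j' - v j : X →L[ℝ] ℝ) : X →ₗ[ℝ] ℝ) x < s j - s j'} := by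
      ext x
      simp only [Set.mem_setOf_eq, ContinuousLinearMap.coe_coe,
        ContinuousLinearMap.sub_apply]
      constructor <;> intro <;> linarith
    rw [heq]
    exact convex_halfSpace_lt (LinearMap.isLinear _) _
  have hVmem : ∀ (T : Finset (Fin p)) (x : X),
      x ∈ V T ↔ ∀ j ∈ T, ∀ j' ∈ Kh, j' ∉ T → v j' x + s j' < v j x + s j := by
    intro T x
    simp only [hVdef, Set.mem_iInter, Set.mem_setOf_eq, Finset.mem_sdiff]
    constructor
    · intro hh j hj j' hj' hj'T
      exact hh j hj j' ⟨hj', hj'T⟩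
    · intro hh j hj j' hjp
      exact hh j hj j' hjp.1 hjp.2
  set A' : Finset (Fin p) → Set X := fun T =>
    if T.Nonempty ∧ T ⊆ Kh ∧ ∀ j ∈ T, (Mm j).Nonempty then P T ∩ (C ∩ V T) else ∅
    with hA'def
  have hA'semi : ∀ T, IsSemiClosedGPCSIn C (A' T) := by
    intro T
    simp only [hA'def]
    split_ifs with hT
    · exact ⟨P T, C ∩ V T, hPgpcs T, hPsubC T, hCconv.inter (hVconv T),
        Set.inter_subset_left, ⟨V T, hVopen T, rfl⟩, rfl⟩
    · exact ⟨∅, ∅, isGPCS_empty, Set.empty_subset _, convex_empty, Set.empty_subset _,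
        ⟨∅, isOpen_empty, (Set.inter_empty C).symm⟩, (Set.empty_inter ∅).symm⟩
  have hLeq : {x : X | IsLocalSolution g h C x} = ⋃ T : Finset (Fin p), A' T := by
    ext z
    simp only [Set.mem_setOf_eq, Set.mem_iUnion]
    constructor
    · intro hloc
      have hzC : z ∈ C := hloc.1
      refine ⟨Kh.filter (fun j => v j z + s j = H z), ?_⟩
      set T := Kh.filter (fun j => v j z + s j = H z) with hT
      have hTsub : T ⊆ Kh := Finset.filter_subset _ _
      have hTne : T.Nonempty := by
        obtain ⟨j₀, hj₀Kh, hj₀⟩ := hHex z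
        exact ⟨j₀, Finset.mem_filter.2 ⟨hj₀Kh, hj₀.symm⟩⟩
      have hact : ∀ j ∈ T, ∀ y ∈ C, φ j z ≤ φ j y := fun j hj =>
        claimA z hloc j (Finset.mem_filter.1 hj).1 (Finset.mem_filter.1 hj).2
      have hMne : ∀ j ∈ T, (Mm j).Nonempty := fun j hj => ⟨z, by
        simp only [hMmdef, Set.mem_setOf_eq]
        exact ⟨hzC, hact j hj⟩⟩
      simp only [hA'def, if_pos (show T.Nonempty ∧ T ⊆ Kh ∧ ∀ j ∈ T, (Mm j).Nonempty from
        ⟨hTne, hTsub, hMne⟩)]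
      refine ⟨(hPmem T z).2 ⟨hzC, fun j hj => ?_⟩, hzC, (hVmem T z).2 fun j hj j' hj' hj'T => ?_⟩
      · have hxh := hxhatMm j (hMne j hj)
        simp only [hMmdef, Set.mem_setOf_eq] at hxh
        exact hact j hj (xhat j) hxh.1
      · have h1 : v j' z + s j' ≤ H z := hHle z j' hj'
        have h2 : v j' z + s j' ≠ H z := fun hcon => hj'T (Finset.mem_filter.2 ⟨hj', hcon⟩)
        have h3 : v j z + s j = H z := (Finset.mem_filter.1 hj).2
        rw [h3]
        exact lt_of_le_of_ne h1 h2
    · rintro ⟨T, hz⟩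
      simp only [hA'def] at hz
      split_ifs at hz with hT
      · obtain ⟨hTne, hTsub, hMne⟩ := hT
        refine claimB z hz.2.1 ?_
        intro j hjKh hjact y hy
        have hjT : j ∈ T := by
          by_contra hjT
          obtain ⟨j₁, hj₁⟩ := hTne
          have hlt := (hVmem T z).1 hz.2.2 j₁ hj₁ j hjKh hjT
          have h1 : v j₁ z + s j₁ ≤ H z := hHle z j₁ (hTsub hj₁)
          rw [hjact] at hlt
          linarith
        have hP := (hPmem T z).1 hz.1
        have h2 : φ j z ≤ μ j := hP.2 j hjT
        have hxh := hxhatMm j (hMne j hjT)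
        simp only [hMmdef, Set.mem_setOf_eq] at hxh
        exact le_trans h2 (hxh.2 y hy)
      · exact absurd hz (Set.notMem_empty z)
  constructor
  · refine ⟨Fintype.card (Finset (Fin p)), A' ∘ (Fintype.equivFin (Finset (Fin p))).symm,
      fun i => hA'semi _, ?_⟩
    rw [hLeq]
    exact ((Fintype.equivFin (Finset (Fin p))).symm.surjective.iUnion_comp A').symm
  · by_cases hS : {x : X | IsSolution g h C x}.Nonempty
    · obtain ⟨w₀, hw₀⟩ := hS
      have hw₀C : w₀ ∈ C := hw₀.1
      set ν := F w₀ with hν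
      set B : Fin p → Set X := fun j =>
        if j ∈ Kh then
          (C ∩ {x | ∀ j' : Fin p, (if j' ∈ Kh then v j' - v j else 0) x
              ≤ (if j' ∈ Kh then s j - s j' else 0)})
          ∩ {x | ∀ i : Fin q, (if i ∈ Kg then u i - v j else 0) x
              ≤ (if i ∈ Kg then ν + s j - rr i else 0)}
        else ∅ with hBdef
      have hBgpcs : ∀ j, IsGPCS X (B j) := by
        intro j
        simp only [hBdef]
        split_ifs with hj
        · exact isGPCS_inter_halfspaces (isGPCS_inter_halfspaces hC2 _ _) _ _
        · exact isGPCS_empty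
      refine ⟨p, B, hBgpcs, ?_⟩
      ext x
      simp only [Set.mem_setOf_eq, Set.mem_iUnion]
      constructor
      · intro hsol
        have hxC : x ∈ C := hsol.1
        have hFx : F x = ν := le_antisymm ((hFle x hxC w₀ hw₀C).1 (hsol.2 w₀ hw₀C))
          ((hFle w₀ hw₀C x hxC).1 (hw₀.2 x hxC))
        obtain ⟨j, hjKh, hjeq⟩ := hHex x
        refine ⟨j, ?_⟩
        simp only [hBdef, if_pos hjKh]
        refine ⟨⟨hxC, fun j' => ?_⟩, fun i => ?_⟩
        · by_cases hj' : j' ∈ Kh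
          · simp only [if_pos hj', ContinuousLinearMap.sub_apply]
            have h1 := hHle x j' hj'
            rw [hjeq] at h1
            linarith
          · simp [if_neg hj']
        · by_cases hi : i ∈ Kg
          · simp only [if_pos hi, ContinuousLinearMap.sub_apply]
            have h1 := hGle x i hi
            have h2 : G x - H x = ν := hFx
            rw [hjeq] at h2
            linarith
          · simp [if_neg hi]
      · rintro ⟨j, hj⟩
        simp only [hBdef] at hj
        split_ifs at hj with hjKh
        · obtain ⟨⟨hxC, hc1⟩, hc2⟩ := hj
          have hHx : H x = v j x + s j := by
            refine le_antisymm (hHsup x _ fun j' hj' => ?_) (hHle x j hjKh)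
            have h1 := hc1 j'
            simp only [if_pos hj', ContinuousLinearMap.sub_apply] at h1
            linarith
          have hGx : G x ≤ ν + (v j x + s j) := by
            refine hGsup x _ fun i hi => ?_
            have h1 := hc2 i
            simp only [if_pos hi, ContinuousLinearMap.sub_apply] at h1
            linarith
          have hFx : F x ≤ ν := by
            simp only [hFdef]
            rw [hHx]
            linarith
          refine ⟨hxC, fun y hy => ?_⟩
          refine (hFle x hxC y hy).2 ?_
          have h3 := (hFle w₀ hw₀C y hy).1 (hw₀.2 y hy)
          linarith
        · exact absurd hj (Set.notMem_empty x)
    · refine ⟨0, fun i => ∅, fun i => i.elim0, ?_⟩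
      rw [Set.not_nonempty_iff_eq_empty.1 hS]
      simp
end
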